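/- arXiv:2404.11494 — 2 statements merged into one kernel-verified Lean document; each statement's English description precedes it below -/
import Mathlib

section
/- For every nonempty subset L ⊆ ℕ_{≥2}, there exists a Puiseux monoid M satisfying the ACCP such that 1 ∈ M and the length set of 1 in M equals L. -/
/-- An atom of the additive submonoid `M`: a nonzero element of `M` that is not the
sum of two nonzero elements of `M`. -/
def IsAtomOf {α : Type*} [AddCommMonoid α] (M : AddSubmonoid α) (a : α) : Prop :=
  a ∈ M ∧ a ≠ 0 ∧ ∀ b ∈ M, ∀ c ∈ M, b + c = a → b = 0 ∨ c = 0

/-- The length set of `q` in `M`: the set of all `ℓ` such that `q` is a sum of `ℓ`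
atoms of `M` (counted with multiplicity). -/
def LengthSet {α : Type*} [AddCommMonoid α] (M : AddSubmonoid α) (q : α) : Set ℕ :=
  {ℓ | ∃ s : Multiset α, Multiset.card s = ℓ ∧ (∀ a ∈ s, IsAtomOf M a) ∧ s.sum = q}

/-- The additive submonoid `M` satisfies the ACCP: every ascending chain of principal
ideals `f n + M ⊆ f (n+1) + M` stabilizes. -/
def AddACCP {α : Type*} [AddCommMonoid α] (M : AddSubmonoid α) : Prop :=
  ∀ f : ℕ → α, (∀ n, f n ∈ M) → (∀ n, ∃ c ∈ M, f n = f (n + 1) + c) →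
    ∃ N, ∀ n ≥ N, ∃ c ∈ M, f n = f N + c

/-- The Puiseux monoid generated by the reciprocals of the elements of `P`. -/
def MP (P : Set ℕ) : AddSubmonoid ℚ :=
  AddSubmonoid.closure {q : ℚ | ∃ p ∈ P, q = 1 / (p : ℚ)}


namespace Stmt15

noncomputable def pp (ℓ : ℕ) : ℕ := Nat.nth Nat.Prime (4 * ℓ)

lemma pp_prime (ℓ : ℕ) : (pp ℓ).Prime := Nat.prime_nth_prime _

lemma nth_ge (n : ℕ) : n + 2 ≤ Nat.nth Nat.Prime n := by
  induction n with
  | zero => exact (Nat.prime_nth_prime 0).two_le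
  | succ n ih =>
    have : Nat.nth Nat.Prime n < Nat.nth Nat.Prime (n + 1) :=
      (Nat.nth_lt_nth Nat.infinite_setOf_prime).2 (Nat.lt_succ_self n)
    omega

lemma pp_ge (ℓ : ℕ) : 4 * ℓ + 2 ≤ pp ℓ := by
  have := nth_ge (4 * ℓ); unfold pp; omega

lemma pp_inj : Function.Injective pp := by
  intro a b h
  have := Nat.nth_injective Nat.infinite_setOf_prime h
  omega

lemma pp_odd (ℓ : ℕ) : ℓ ≠ 0 → pp ℓ % 2 = 1 := by
  intro h
  have h1 := pp_prime ℓ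
  have h2 := pp_ge ℓ
  rcases (Nat.Prime.eq_one_or_self_of_dvd h1 2 ·) with h3
  have := h1.two_le
  rcases Nat.Prime.eq_two_or_odd h1 with h4 | h4
  · omega
  · omega

noncomputable def rr (ℓ : ℕ) : ℕ := pp ℓ - 2 * ℓ + 2

lemma rr_pos (ℓ : ℕ) : 2 * ℓ + 4 ≤ rr ℓ := by have := pp_ge ℓ; unfold rr; omega

lemma rr_add (ℓ : ℕ) : rr ℓ + 2 * ℓ = pp ℓ + 2 := by have := pp_ge ℓ; unfold rr; omega

lemma rr_odd (ℓ : ℕ) (h : ℓ ≠ 0) : rr ℓ % 2 = 1 := by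
  have := pp_odd ℓ h; have := rr_add ℓ; omega

lemma two_rr (ℓ : ℕ) : pp ℓ < 2 * rr ℓ := by
  have := pp_ge ℓ; unfold rr; omega


lemma pp_pos (ℓ : ℕ) : 0 < pp ℓ := (pp_prime ℓ).pos
lemma pp_ne (ℓ : ℕ) : ((pp ℓ : ℚ)) ≠ 0 := by
  exact_mod_cast (pp_pos ℓ).ne'

/-- Clearing denominators. -/
lemma clear (S : Finset ℕ) (w : ℕ → ℕ) :
    (∑ ℓ ∈ S, (w ℓ : ℚ) / pp ℓ) * ∏ k ∈ S, (pp k : ℚ)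
      = ((∑ ℓ ∈ S, w ℓ * ∏ k ∈ S.erase ℓ, pp k : ℕ) : ℚ) := by
  push_cast
  rw [Finset.sum_mul]
  refine Finset.sum_congr rfl (fun ℓ hℓ => ?_)
  rw [← Finset.mul_prod_erase S (fun k => ((pp k : ℚ))) hℓ,
    show (w ℓ : ℚ) / pp ℓ * ((pp ℓ : ℚ) * ∏ x ∈ S.erase ℓ, (pp x : ℚ))
      = ((w ℓ : ℚ) * ∏ x ∈ S.erase ℓ, (pp x : ℚ)) * ((pp ℓ : ℚ) / pp ℓ) by ring,
    div_self (pp_ne ℓ), mul_one]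

/-- The fundamental congruence: two representations with the same value have
congruent coefficients. -/
lemma congr_mod (S : Finset ℕ) (w w' : ℕ → ℕ)
    (h : ∑ ℓ ∈ S, (w ℓ : ℚ) / pp ℓ = ∑ ℓ ∈ S, (w' ℓ : ℚ) / pp ℓ) :
    ∀ ℓ0 ∈ S, w ℓ0 % pp ℓ0 = w' ℓ0 % pp ℓ0 := by
  intro ℓ0 hℓ0
  have hQ : (∑ ℓ ∈ S, w ℓ * ∏ k ∈ S.erase ℓ, pp k : ℕ)
      = (∑ ℓ ∈ S, w' ℓ * ∏ k ∈ S.erase ℓ, pp k : ℕ) := by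
    have := clear S w
    rw [h, clear S w'] at this
    exact_mod_cast this.symm
  have hp := pp_prime ℓ0
  haveI : Fact (pp ℓ0).Prime := ⟨hp⟩
  -- reduce mod pp ℓ0
  have hz : ((∑ ℓ ∈ S, w ℓ * ∏ k ∈ S.erase ℓ, pp k : ℕ) : ZMod (pp ℓ0))
      = (w ℓ0 : ZMod (pp ℓ0)) * (∏ k ∈ S.erase ℓ0, (pp k : ℕ) : ZMod (pp ℓ0)) ∧
      ((∑ ℓ ∈ S, w' ℓ * ∏ k ∈ S.erase ℓ, pp k : ℕ) : ZMod (pp ℓ0))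
      = (w' ℓ0 : ZMod (pp ℓ0)) * (∏ k ∈ S.erase ℓ0, (pp k : ℕ) : ZMod (pp ℓ0)) := by
    constructor <;>
    · push_cast
      rw [Finset.sum_eq_single_of_mem ℓ0 hℓ0]
      intro ℓ hℓ hne
      have : ((pp ℓ0 : ZMod (pp ℓ0))) = 0 := ZMod.natCast_self _
      rw [← Finset.mul_prod_erase (S.erase ℓ) (fun k => ((pp k : ZMod (pp ℓ0))))
        (Finset.mem_erase.2 ⟨fun hc => hne (by rw [hc]) , hℓ0⟩), this]
      ring
  have hC : (∏ k ∈ S.erase ℓ0, (pp k : ℕ) : ZMod (pp ℓ0)) ≠ 0 := by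
    have : ¬ (pp ℓ0 ∣ ∏ k ∈ S.erase ℓ0, pp k) := by
      rw [Prime.dvd_finset_prod_iff hp.prime]
      rintro ⟨k, hk, hdvd⟩
      have hk0 : k ≠ ℓ0 := (Finset.mem_erase.1 hk).1
      have := (Nat.prime_dvd_prime_iff_eq hp (pp_prime k)).1 hdvd
      exact hk0 (pp_inj this.symm)
    have h0 : ((∏ k ∈ S.erase ℓ0, pp k : ℕ) : ZMod (pp ℓ0)) ≠ 0 := by
      rw [Ne, ZMod.natCast_eq_zero_iff]; exact this
    push_cast at h0
    exact h0
  have : (w ℓ0 : ZMod (pp ℓ0)) = (w' ℓ0 : ZMod (pp ℓ0)) := by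
    have h1 := hz.1
    have h2 := hz.2
    rw [hQ] at h1
    rw [h1] at h2
    exact (mul_right_cancel₀ hC h2.symm).symm
  have := (ZMod.natCast_eq_natCast_iff _ _ _).1 this
  exact this


/-- If a nonnegative combination of `1/pp ℓ` equals `a / pp j` with `0 < a < pp j`,
then only the `j`-th coefficient is nonzero and it equals `a`. -/
lemma single_rep (S : Finset ℕ) (w : ℕ → ℕ) (j : ℕ) (hj : j ∈ S) (a : ℕ)
    (ha : 0 < a) (ha2 : a < pp j)
    (h : ∑ ℓ ∈ S, (w ℓ : ℚ) / pp ℓ = (a : ℚ) / pp j) :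
    w j = a ∧ ∀ ℓ ∈ S, ℓ ≠ j → w ℓ = 0 := by
  have hppq : ∀ ℓ : ℕ, (0:ℚ) < pp ℓ := fun ℓ => by exact_mod_cast pp_pos ℓ
  have hw' : ∑ ℓ ∈ S, (((if ℓ = j then a else 0 : ℕ)) : ℚ) / pp ℓ = (a : ℚ) / pp j := by
    rw [Finset.sum_eq_single_of_mem j hj]
    · simp
    · intro b _ hb; simp [hb]
  have hmod := congr_mod S w (fun ℓ => if ℓ = j then a else 0) (h.trans hw'.symm)
  have hz : ∀ ℓ ∈ S, ℓ ≠ j → w ℓ = 0 := by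
    intro ℓ hℓ hne
    have h1 := hmod ℓ hℓ
    simp [hne] at h1
    by_contra h0
    have hge : pp ℓ ≤ w ℓ := Nat.le_of_dvd (Nat.pos_of_ne_zero h0) (Nat.dvd_of_mod_eq_zero h1)
    have h2 : (1:ℚ) ≤ (w ℓ : ℚ) / pp ℓ := by
      rw [le_div_iff₀ (hppq ℓ), one_mul]; exact_mod_cast hge
    have h3 : (w ℓ : ℚ) / pp ℓ ≤ ∑ k ∈ S, (w k : ℚ) / pp k :=
      Finset.single_le_sum (f := fun k => (w k : ℚ) / pp k) (fun k _ => by positivity) hℓ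
    have h4 : (a:ℚ)/pp j < 1 := by
      rw [div_lt_one (hppq j)]; exact_mod_cast ha2
    linarith
  have hsum : ∑ ℓ ∈ S, (w ℓ : ℚ) / pp ℓ = (w j : ℚ) / pp j := by
    rw [Finset.sum_eq_single_of_mem j hj]
    intro b hb hbj
    rw [hz b hb hbj]
    norm_num
  rw [hsum] at h
  have : (w j : ℚ) = a := by
    rw [div_eq_div_iff (pp_ne j) (pp_ne j)] at h
    exact mul_right_cancel₀ (pp_ne j) h
  exact ⟨by exact_mod_cast this, hz⟩

/-- If a nonnegative combination of `1/pp ℓ` equals `1`, then exactly one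
coefficient is nonzero and it equals `pp j`. -/
lemma one_rep (S : Finset ℕ) (w : ℕ → ℕ)
    (h : ∑ ℓ ∈ S, (w ℓ : ℚ) / pp ℓ = 1) :
    ∃ j ∈ S, w j = pp j ∧ ∀ ℓ ∈ S, ℓ ≠ j → w ℓ = 0 := by
  have hppq : ∀ ℓ : ℕ, (0:ℚ) < pp ℓ := fun ℓ => by exact_mod_cast pp_pos ℓ
  have hSne : S.Nonempty := by
    rcases S.eq_empty_or_nonempty with rfl | hS
    · simp at h
    · exact hS
  obtain ⟨j0, hj0⟩ := hSne
  have hw' : ∑ ℓ ∈ S, (((if ℓ = j0 then pp j0 else 0 : ℕ)) : ℚ) / pp ℓ = 1 := by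
    rw [Finset.sum_eq_single_of_mem j0 hj0]
    · simp [div_self (pp_ne j0)]
    · intro b _ hb; simp [hb]
  have hmod := congr_mod S w (fun ℓ => if ℓ = j0 then pp j0 else 0) (h.trans hw'.symm)
  have hdvd : ∀ ℓ ∈ S, pp ℓ ∣ w ℓ := by
    intro ℓ hℓ
    have h1 := hmod ℓ hℓ
    by_cases hc : ℓ = j0
    · subst hc; simp [Nat.mod_self] at h1; exact Nat.dvd_of_mod_eq_zero h1
    · simp [hc] at h1; exact Nat.dvd_of_mod_eq_zero h1
  -- pass to natural numbers: ∑ (w ℓ / pp ℓ) = 1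
  have hn : ∑ ℓ ∈ S, (w ℓ / pp ℓ : ℕ) = 1 := by
    have : ((∑ ℓ ∈ S, (w ℓ / pp ℓ : ℕ) : ℕ) : ℚ) = 1 := by
      push_cast
      rw [← h]
      refine Finset.sum_congr rfl (fun ℓ hℓ => ?_)
      obtain ⟨k, hk⟩ := hdvd ℓ hℓ
      rw [hk, Nat.mul_div_cancel_left k (pp_pos ℓ)]
      push_cast
      rw [mul_comm, mul_div_assoc, div_self (pp_ne ℓ), mul_one]
    exact_mod_cast this
  have hex : ∃ j ∈ S, w j / pp j = 1 ∧ ∀ ℓ ∈ S, ℓ ≠ j → w ℓ / pp ℓ = 0 := by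
    by_cases hall : ∀ ℓ ∈ S, w ℓ / pp ℓ = 0
    · rw [Finset.sum_eq_zero hall] at hn; omega
    · push_neg at hall
      obtain ⟨j, hjS, hjne⟩ := hall
      rw [← Finset.add_sum_erase S _ hjS] at hn
      have hjp : 1 ≤ w j / pp j := Nat.one_le_iff_ne_zero.2 hjne
      have h5 : ∑ ℓ ∈ S.erase j, (w ℓ / pp ℓ : ℕ) = 0 := by omega
      refine ⟨j, hjS, by omega, fun ℓ hℓ hne => ?_⟩
      exact (Finset.sum_eq_zero_iff).1 h5 ℓ (Finset.mem_erase.2 ⟨hne, hℓ⟩)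
  obtain ⟨j, hjS, h1, h0⟩ := hex
  refine ⟨j, hjS, ?_, fun ℓ hℓ hne => ?_⟩
  · obtain ⟨k, hk⟩ := hdvd j hjS
    rw [hk, Nat.mul_div_cancel_left k (pp_pos j)] at h1
    rw [hk, h1, mul_one]
  · obtain ⟨k, hk⟩ := hdvd ℓ hℓ
    have := h0 ℓ hℓ hne
    rw [hk, Nat.mul_div_cancel_left k (pp_pos ℓ)] at this
    rw [hk, this, mul_zero]


section Monoid
variable (L : Set ℕ)

/-- The generating set. -/
def Gset : Set ℚ := {q | ∃ ℓ ∈ L, q = (rr ℓ : ℚ) / pp ℓ ∨ q = 2 / pp ℓ}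

/-- The monoid. -/
noncomputable def MM : AddSubmonoid ℚ := AddSubmonoid.closure (Gset L)

variable {L}

lemma gen_pos {a : ℚ} (ha : a ∈ Gset L) : 0 < a := by
  obtain ⟨ℓ, _, h | h⟩ := ha <;> subst h <;>
  · have h1 : (0:ℚ) < rr ℓ := by exact_mod_cast Nat.lt_of_lt_of_le (by omega) (rr_pos ℓ)
    have h2 : (0:ℚ) < pp ℓ := by exact_mod_cast pp_pos ℓ
    positivity

/-- Value of the combined coefficient sum. -/
noncomputable def SumXY (S : Finset ℕ) (x y : ℕ → ℕ) : ℚ :=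
  ∑ ℓ ∈ S, ((x ℓ * rr ℓ + 2 * y ℓ : ℕ) : ℚ) / pp ℓ

lemma SumXY_ext {S T : Finset ℕ} (hST : S ⊆ T) {x y : ℕ → ℕ}
    (h0 : ∀ ℓ ∉ S, x ℓ = 0 ∧ y ℓ = 0) : SumXY T x y = SumXY S x y := by
  refine (Finset.sum_subset hST (fun ℓ _ hℓ => ?_)).symm
  obtain ⟨hx, hy⟩ := h0 ℓ hℓ
  simp [hx, hy]

/-- Every multiset of generators has a coefficient representation. -/
lemma multiset_rep (s : Multiset ℚ) (hs : ∀ a ∈ s, a ∈ Gset L) :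
    ∃ (S : Finset ℕ) (x y : ℕ → ℕ),
      ↑S ⊆ L ∧ (∀ ℓ ∉ S, x ℓ = 0 ∧ y ℓ = 0) ∧
      s.sum = SumXY S x y ∧
      Multiset.card s = ∑ ℓ ∈ S, (x ℓ + y ℓ) := by
  induction s using Multiset.induction with
  | empty => exact ⟨∅, 0, 0, by simp, by simp, by simp [SumXY], by simp⟩
  | cons a t ih =>
    obtain ⟨S, x, y, hSL, hxy0, hsum, hcard⟩ :=
      ih (fun b hb => hs b (Multiset.mem_cons_of_mem hb))
    obtain ⟨ℓ0, hℓ0L, hcase⟩ := hs a (Multiset.mem_cons_self a t)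
    set S' : Finset ℕ := insert ℓ0 S with hS'
    have hSS' : S ⊆ S' := Finset.subset_insert _ _
    have hS'L : ↑S' ⊆ L := by
      intro ℓ hℓ
      simp only [hS', Finset.coe_insert, Set.mem_insert_iff] at hℓ
      rcases hℓ with rfl | hℓ
      · exact hℓ0L
      · exact hSL hℓ
    have key : ∀ dx dy : ℕ,
        SumXY S' (fun ℓ => if ℓ = ℓ0 then x ℓ + dx else x ℓ)
          (fun ℓ => if ℓ = ℓ0 then y ℓ + dy else y ℓ)
        = ((dx * rr ℓ0 + 2 * dy : ℕ) : ℚ) / pp ℓ0 + SumXY S x y := by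
      intro dx dy
      have hsplit : SumXY S' (fun ℓ => if ℓ = ℓ0 then x ℓ + dx else x ℓ)
          (fun ℓ => if ℓ = ℓ0 then y ℓ + dy else y ℓ)
          = (∑ ℓ ∈ S', ((x ℓ * rr ℓ + 2 * y ℓ : ℕ) : ℚ) / pp ℓ)
            + ∑ ℓ ∈ S', (((if ℓ = ℓ0 then dx * rr ℓ + 2 * dy else 0 : ℕ)) : ℚ) / pp ℓ := by
        rw [← Finset.sum_add_distrib]
        refine Finset.sum_congr rfl (fun ℓ hℓ => ?_)
        by_cases hc : ℓ = ℓ0 <;> simp only [hc, if_true, if_false, if_pos, if_neg] <;>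
        · rw [← add_div]
          congr 1
          push_cast
          ring
      rw [hsplit, ← SumXY, SumXY_ext hSS' hxy0,
        Finset.sum_eq_single_of_mem ℓ0 (Finset.mem_insert_self _ _)]
      · simp only [if_true]
        ring
      · intro b _ hb; simp [hb]
    have hcards : ∀ dx dy : ℕ,
        ∑ ℓ ∈ S', ((if ℓ = ℓ0 then x ℓ + dx else x ℓ) + (if ℓ = ℓ0 then y ℓ + dy else y ℓ))
          = (dx + dy) + ∑ ℓ ∈ S, (x ℓ + y ℓ) := by
      intro dx dy
      have : ∀ ℓ ∈ S', ((if ℓ = ℓ0 then x ℓ + dx else x ℓ) + (if ℓ = ℓ0 then y ℓ + dy else y ℓ))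
          = (x ℓ + y ℓ) + (if ℓ = ℓ0 then dx + dy else 0) := by
        intro ℓ _; by_cases hc : ℓ = ℓ0 <;> simp [hc] <;> ring
      rw [Finset.sum_congr rfl this, Finset.sum_add_distrib]
      have h1 : (∑ ℓ ∈ S', if ℓ = ℓ0 then dx + dy else 0) = dx + dy := by
        rw [Finset.sum_eq_single_of_mem ℓ0 (Finset.mem_insert_self _ _)
          (fun b _ hb => if_neg hb)]
        exact if_pos rfl
      rw [h1]
      have hS : ∑ ℓ ∈ S', (x ℓ + y ℓ) = ∑ ℓ ∈ S, (x ℓ + y ℓ) := by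
        refine (Finset.sum_subset hSS' (fun ℓ _ hℓ => ?_)).symm
        obtain ⟨hx, hy⟩ := hxy0 ℓ hℓ
        simp [hx, hy]
      rw [hS]; ring
    rcases hcase with rfl | rfl
    · refine ⟨S', (fun ℓ => if ℓ = ℓ0 then x ℓ + 1 else x ℓ), y, hS'L, ?_, ?_, ?_⟩
      · intro ℓ hℓ
        have hℓS : ℓ ∉ S := fun hc => hℓ (hSS' hc)
        have hne : ℓ ≠ ℓ0 := fun hc => hℓ (hc ▸ Finset.mem_insert_self _ _)
        simpa [hne] using hxy0 ℓ hℓS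
      · rw [Multiset.sum_cons, hsum]
        have := key 1 0
        simp only [Nat.mul_zero, Nat.add_zero, Nat.one_mul, add_zero, ite_self] at this
        rw [this]
      · rw [Multiset.card_cons, hcard]
        have := hcards 1 0
        simp only [Nat.add_zero, add_zero, ite_self] at this
        rw [this]; ring
    · refine ⟨S', x, (fun ℓ => if ℓ = ℓ0 then y ℓ + 1 else y ℓ), hS'L, ?_, ?_, ?_⟩
      · intro ℓ hℓ
        have hℓS : ℓ ∉ S := fun hc => hℓ (hSS' hc)
        have hne : ℓ ≠ ℓ0 := fun hc => hℓ (hc ▸ Finset.mem_insert_self _ _)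
        simpa [hne] using hxy0 ℓ hℓS
      · rw [Multiset.sum_cons, hsum]
        have := key 0 1
        simp only [Nat.zero_mul, Nat.mul_one, Nat.zero_add, add_zero, ite_self] at this
        rw [this]
        norm_num
      · rw [Multiset.card_cons, hcard]
        have := hcards 0 1
        simp only [Nat.add_zero, add_zero, ite_self] at this
        rw [this]; ring

end Monoid

section Main
variable {L : Set ℕ}

lemma mem_rep {m : ℚ} (hm : m ∈ MM L) :
    ∃ S x y, ↑S ⊆ L ∧ (∀ ℓ ∉ S, x ℓ = 0 ∧ y ℓ = 0) ∧ m = SumXY S x y := by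
  obtain ⟨s, hs, hsum⟩ := AddSubmonoid.exists_multiset_of_mem_closure hm
  obtain ⟨S, x, y, h1, hx2, h3, _⟩ := multiset_rep s hs
  exact ⟨S, x, y, h1, hx2, hsum ▸ h3⟩

lemma MM_nonneg {m : ℚ} (hm : m ∈ MM L) : 0 ≤ m := by
  obtain ⟨S, x, y, _, _, rfl⟩ := mem_rep hm
  refine Finset.sum_nonneg (fun ℓ _ => by positivity)

/-- Splitting a fraction `a / pp j` (with `0 < a < pp j`) into two monoid elements. -/
lemma atom_split {j : ℕ} (a : ℕ) (ha : 0 < a) (ha2 : a < pp j)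
    {b c : ℚ} (hb : b ∈ MM L) (hc : c ∈ MM L) (hbc : b + c = (a : ℚ) / pp j) :
    ∃ x1 y1 x2 y2 : ℕ, b = ((x1 * rr j + 2 * y1 : ℕ) : ℚ) / pp j ∧
      c = ((x2 * rr j + 2 * y2 : ℕ) : ℚ) / pp j ∧
      (x1 + x2) * rr j + 2 * (y1 + y2) = a := by
  obtain ⟨S1, x1, y1, hS1L, h01, rfl⟩ := mem_rep hb
  obtain ⟨S2, x2, y2, hS2L, h02, rfl⟩ := mem_rep hc
  set S : Finset ℕ := insert j (S1 ∪ S2) with hS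
  have hjS : j ∈ S := Finset.mem_insert_self _ _
  have hS1S : S1 ⊆ S := fun ℓ hℓ =>
    Finset.mem_insert_of_mem (Finset.mem_union_left _ hℓ)
  have hS2S : S2 ⊆ S := fun ℓ hℓ =>
    Finset.mem_insert_of_mem (Finset.mem_union_right _ hℓ)
  set w : ℕ → ℕ := fun ℓ => (x1 ℓ + x2 ℓ) * rr ℓ + 2 * (y1 ℓ + y2 ℓ) with hw
  have hsum : ∑ ℓ ∈ S, (w ℓ : ℚ) / pp ℓ = (a : ℚ) / pp j := by
    rw [← hbc, ← SumXY_ext hS1S h01, ← SumXY_ext hS2S h02, SumXY, SumXY,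
      ← Finset.sum_add_distrib]
    refine Finset.sum_congr rfl (fun ℓ _ => ?_)
    rw [← add_div]
    congr 1
    push_cast [hw]
    ring
  obtain ⟨hwj, hw0⟩ := single_rep S w j hjS a ha ha2 hsum
  have hterm : ∀ x' y' : ℕ → ℕ, (∀ ℓ ∉ S, x' ℓ = 0 ∧ y' ℓ = 0) →
      (∀ ℓ ∈ S, ℓ ≠ j → x' ℓ = 0 ∧ y' ℓ = 0) →
      (∀ T ⊆ S, (∀ ℓ ∉ T, x' ℓ = 0 ∧ y' ℓ = 0) →
        SumXY T x' y' = ((x' j * rr j + 2 * y' j : ℕ) : ℚ) / pp j) := by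
    intro x' y' hout hin T hTS h0T
    rw [← SumXY_ext hTS h0T, SumXY, Finset.sum_eq_single_of_mem j hjS]
    intro ℓ hℓ hne
    obtain ⟨hx', hy'⟩ := hin ℓ hℓ hne
    simp [hx', hy']
  have hzero : ∀ ℓ ∈ S, ℓ ≠ j → (x1 ℓ = 0 ∧ y1 ℓ = 0) ∧ (x2 ℓ = 0 ∧ y2 ℓ = 0) := by
    intro ℓ hℓ hne
    have h0 := hw0 ℓ hℓ hne
    have hrr := rr_pos ℓ
    rw [hw] at h0
    simp only at h0
    have hx12 : x1 ℓ + x2 ℓ = 0 := by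
      by_contra hcon
      have h1 : rr ℓ ≤ (x1 ℓ + x2 ℓ) * rr ℓ :=
        Nat.le_mul_of_pos_left _ (Nat.pos_of_ne_zero hcon)
      omega
    omega
  refine ⟨x1 j, y1 j, x2 j, y2 j, ?_, ?_, ?_⟩
  · exact hterm x1 y1 (fun ℓ hℓ => h01 ℓ (fun hc => hℓ (hS1S hc)))
      (fun ℓ hℓ hne => (hzero ℓ hℓ hne).1) S1 hS1S h01
  · exact hterm x2 y2 (fun ℓ hℓ => h02 ℓ (fun hc => hℓ (hS2S hc)))
      (fun ℓ hℓ hne => (hzero ℓ hℓ hne).2) S2 hS2S h02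
  · rw [hw] at hwj
    exact hwj

lemma gen_rr_lt (h2 : ∀ ℓ ∈ L, 2 ≤ ℓ) {j : ℕ} (hj : j ∈ L) : rr j < pp j := by
  have := rr_add j
  have := h2 j hj
  omega

lemma gen_atom (h2 : ∀ ℓ ∈ L, 2 ≤ ℓ) {g : ℚ} (hg : g ∈ Gset L) :
    IsAtomOf (MM L) g := by
  refine ⟨AddSubmonoid.subset_closure hg, (gen_pos hg).ne', ?_⟩
  intro b hb c hc hbc
  obtain ⟨j, hjL, hcase⟩ := hg
  have hj2 := h2 j hjL
  have hrlt := gen_rr_lt h2 hjL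
  have hrodd := rr_odd j (by omega)
  have hrpos := rr_pos j
  have hppos := pp_pos j
  rcases hcase with rfl | rfl
  · obtain ⟨u1, v1, u2, v2, hbeq, hceq, heq⟩ :=
      atom_split (rr j) (by omega) hrlt hb hc hbc
    have hkey : u1 * rr j + 2 * v1 = 0 ∨ u2 * rr j + 2 * v2 = 0 := by
      have hx : (u1 = 0 ∧ u2 = 0) ∨ (u1 = 1 ∧ u2 = 0) ∨ (u1 = 0 ∧ u2 = 1)
          ∨ 2 ≤ u1 + u2 := by omega
      rcases hx with ⟨rfl, rfl⟩ | ⟨rfl, rfl⟩ | ⟨rfl, rfl⟩ | hx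
      · omega
      · omega
      · omega
      · have h5 : 2 * rr j ≤ (u1 + u2) * rr j := Nat.mul_le_mul_right _ hx
        omega
    rcases hkey with h | h
    · left; rw [hbeq, h]; simp
    · right; rw [hceq, h]; simp
  · have hbc' : b + c = ((2 : ℕ) : ℚ) / pp j := by rw [hbc]; norm_num
    obtain ⟨u1, v1, u2, v2, hbeq, hceq, heq⟩ :=
      atom_split 2 (by omega) (by omega) hb hc hbc'
    have hkey : u1 * rr j + 2 * v1 = 0 ∨ u2 * rr j + 2 * v2 = 0 := by
      have hx : u1 + u2 = 0 ∨ 1 ≤ u1 + u2 := by omega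
      rcases hx with hx | hx
      · have h1 : u1 = 0 ∧ u2 = 0 := by omega
        obtain ⟨rfl, rfl⟩ := h1
        omega
      · have h5 : rr j ≤ (u1 + u2) * rr j := Nat.le_mul_of_pos_left _ hx
        omega
    rcases hkey with h | h
    · left; rw [hbeq, h]; simp
    · right; rw [hceq, h]; simp

lemma atom_gen {a : ℚ} (ha : IsAtomOf (MM L) a) : a ∈ Gset L := by
  obtain ⟨haM, hane, hsplit⟩ := ha
  obtain ⟨s, hs, hsum⟩ := AddSubmonoid.exists_multiset_of_mem_closure haM
  rcases s.empty_or_exists_mem with rfl | ⟨g, hg⟩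
  · simp at hsum; exact absurd hsum.symm hane
  obtain ⟨t, rfl⟩ := Multiset.exists_cons_of_mem hg
  rcases t.empty_or_exists_mem with rfl | ⟨g', hg'⟩
  · simp at hsum; rw [← hsum]; exact hs g hg
  exfalso
  have hgG : g ∈ Gset L := hs g hg
  have hgM : g ∈ MM L := AddSubmonoid.subset_closure hgG
  have htM : t.sum ∈ MM L := AddSubmonoid.multiset_sum_mem _ _
    (fun b hb => AddSubmonoid.subset_closure (hs b (Multiset.mem_cons_of_mem hb)))
  have htpos : 0 < t.sum := by
    obtain ⟨t', rfl⟩ := Multiset.exists_cons_of_mem hg'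
    rw [Multiset.sum_cons]
    have h1 : 0 < g' := gen_pos (hs g' (Multiset.mem_cons_of_mem (Multiset.mem_cons_self _ _)))
    have h2 : 0 ≤ t'.sum := MM_nonneg (AddSubmonoid.multiset_sum_mem _ _
      (fun b hb => AddSubmonoid.subset_closure
        (hs b (Multiset.mem_cons_of_mem (Multiset.mem_cons_of_mem hb)))))
    linarith
  rw [Multiset.sum_cons] at hsum
  rcases hsplit g hgM t.sum htM hsum with h | h
  · exact (gen_pos hgG).ne' h
  · exact htpos.ne' h

end Main

section Length
variable {L : Set ℕ}

lemma length_subset (h2 : ∀ ℓ ∈ L, 2 ≤ ℓ) : LengthSet (MM L) 1 ⊆ L := by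
  rintro n ⟨s, hcard, hatoms, hsum⟩
  obtain ⟨S, x, y, hSL, h0, hrep, hn⟩ := multiset_rep s (fun a ha => atom_gen (hatoms a ha))
  rw [hsum] at hrep
  obtain ⟨j, hjS, hwj, hw0⟩ := one_rep S (fun ℓ => x ℓ * rr ℓ + 2 * y ℓ) hrep.symm
  have hjL : j ∈ L := hSL hjS
  have hj2 := h2 j hjL
  have hradd := rr_add j
  have hrodd := rr_odd j (by omega)
  have hrpos := rr_pos j
  have h2rr := two_rr j
  -- x j = 1, y j = j - 1
  have hxj : x j = 1 ∧ y j = j - 1 := by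
    have hx : (x j = 0) ∨ (x j = 1) ∨ 2 ≤ x j := by omega
    rcases hx with hx | hx | hx
    · rw [hx] at hwj; omega
    · rw [hx] at hwj; omega
    · have h5 : 2 * rr j ≤ x j * rr j := Nat.mul_le_mul_right _ hx
      omega
  have hzero : ∀ ℓ ∈ S, ℓ ≠ j → x ℓ = 0 ∧ y ℓ = 0 := by
    intro ℓ hℓ hne
    have h0' := hw0 ℓ hℓ hne
    have hrr := rr_pos ℓ
    have hx : x ℓ = 0 := by
      by_contra hcon
      have h1 : rr ℓ ≤ x ℓ * rr ℓ := Nat.le_mul_of_pos_left _ (Nat.pos_of_ne_zero hcon)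
      omega
    omega
  have hns : n = x j + y j := by
    rw [← hcard, hn, Finset.sum_eq_single_of_mem j hjS]
    intro ℓ hℓ hne
    have := hzero ℓ hℓ hne
    omega
  rw [hns, hxj.1, hxj.2]
  have : 1 + (j - 1) = j := by omega
  rw [this]
  exact hjL

lemma length_factor {j : ℕ} (hjL : j ∈ L) (hj2 : 2 ≤ j) :
    ∃ s : Multiset ℚ, Multiset.card s = j ∧ (∀ a ∈ s, a ∈ Gset L) ∧ s.sum = 1 := by
  refine ⟨((rr j : ℚ) / pp j) ::ₘ Multiset.replicate (j - 1) ((2 : ℚ) / pp j), ?_, ?_, ?_⟩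
  · simp; omega
  · intro a ha
    rcases Multiset.mem_cons.1 ha with rfl | ha
    · exact ⟨j, hjL, Or.inl rfl⟩
    · rw [Multiset.eq_of_mem_replicate ha]
      exact ⟨j, hjL, Or.inr rfl⟩
  · rw [Multiset.sum_cons, Multiset.sum_replicate, nsmul_eq_mul]
    have hppos : (0:ℚ) < pp j := by exact_mod_cast pp_pos j
    have hradd := rr_add j
    have hcast : ((j - 1 : ℕ) : ℚ) * 2 + (rr j : ℚ) = pp j := by
      have hnat : (j - 1) * 2 + rr j = pp j := by omega
      exact_mod_cast congrArg (fun t : ℕ => (t : ℚ)) hnat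
    have hc2 : ((j - 1 : ℕ) : ℚ) = (j : ℚ) - 1 := by
      rw [Nat.cast_sub (by omega)]; simp
    rw [hc2] at hcast
    field_simp
    linarith [hcast]

lemma length_eq (h2 : ∀ ℓ ∈ L, 2 ≤ ℓ) : LengthSet (MM L) 1 = L := by
  refine Set.Subset.antisymm (length_subset h2) (fun j hjL => ?_)
  obtain ⟨s, hcard, hgen, hsum⟩ := length_factor hjL (h2 j hjL)
  exact ⟨s, hcard, fun a ha => gen_atom h2 (hgen a ha), hsum⟩

lemma one_mem (hne : L.Nonempty) (h2 : ∀ ℓ ∈ L, 2 ≤ ℓ) : (1 : ℚ) ∈ MM L := by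
  obtain ⟨j, hjL⟩ := hne
  obtain ⟨s, _, hgen, hsum⟩ := length_factor hjL (h2 j hjL)
  rw [← hsum]
  exact AddSubmonoid.multiset_sum_mem _ _
    (fun b hb => AddSubmonoid.subset_closure (hgen b hb))

end Length

section ACCPsec
variable {L : Set ℕ}

noncomputable def WSum (S : Finset ℕ) (w : ℕ → ℕ) : ℚ := ∑ ℓ ∈ S, (w ℓ : ℚ) / pp ℓ

def Vanish (S : Finset ℕ) (w : ℕ → ℕ) : Prop := ∀ ℓ ∉ S, w ℓ = 0

lemma WSum_ext {S T : Finset ℕ} (hST : S ⊆ T) {w : ℕ → ℕ} (h0 : Vanish S w) :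
    WSum T w = WSum S w :=
  (Finset.sum_subset hST (fun ℓ _ hℓ => by rw [h0 ℓ hℓ]; simp)).symm

noncomputable def NDivT (S : Finset ℕ) (w : ℕ → ℕ) : ℕ := ∑ ℓ ∈ S, w ℓ / pp ℓ
noncomputable def TModT (S : Finset ℕ) (w : ℕ → ℕ) : ℕ := ∑ ℓ ∈ S, w ℓ % pp ℓ

lemma NDivT_ext {S T : Finset ℕ} (hST : S ⊆ T) {w : ℕ → ℕ} (h0 : Vanish S w) :
    NDivT T w = NDivT S w :=
  (Finset.sum_subset hST (fun ℓ _ hℓ => by rw [h0 ℓ hℓ]; simp)).symm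

lemma TModT_ext {S T : Finset ℕ} (hST : S ⊆ T) {w : ℕ → ℕ} (h0 : Vanish S w) :
    TModT T w = TModT S w :=
  (Finset.sum_subset hST (fun ℓ _ hℓ => by rw [h0 ℓ hℓ]; simp)).symm

lemma WSum_split (S : Finset ℕ) (w : ℕ → ℕ) :
    WSum S w = (NDivT S w : ℚ) + ∑ ℓ ∈ S, ((w ℓ % pp ℓ : ℕ) : ℚ) / pp ℓ := by
  rw [WSum, NDivT, Nat.cast_sum, ← Finset.sum_add_distrib]
  refine Finset.sum_congr rfl (fun ℓ _ => ?_)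
  have e := Nat.div_add_mod (w ℓ) (pp ℓ)
  have hpq : ((pp ℓ : ℚ)) ≠ 0 := pp_ne ℓ
  have : (w ℓ : ℚ) = (pp ℓ : ℚ) * ((w ℓ / pp ℓ : ℕ) : ℚ) + ((w ℓ % pp ℓ : ℕ) : ℚ) := by
    exact_mod_cast congrArg (fun t : ℕ => (t : ℚ)) e.symm
  rw [this]
  field_simp

/-- The two invariants only depend on the value. -/
lemma invariants_eq {S1 S2 : Finset ℕ} {w1 w2 : ℕ → ℕ}
    (h1 : Vanish S1 w1) (h2 : Vanish S2 w2) (h : WSum S1 w1 = WSum S2 w2) :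
    NDivT S1 w1 = NDivT S2 w2 ∧ TModT S1 w1 = TModT S2 w2 := by
  set T := S1 ∪ S2 with hT
  have hs1 : S1 ⊆ T := Finset.subset_union_left
  have hs2 : S2 ⊆ T := Finset.subset_union_right
  have hW : WSum T w1 = WSum T w2 := by rw [WSum_ext hs1 h1, WSum_ext hs2 h2, h]
  have hmod := congr_mod T w1 w2 hW
  have hTM : TModT T w1 = TModT T w2 := Finset.sum_congr rfl (fun ℓ hℓ => hmod ℓ hℓ)
  have hMQ : ∑ ℓ ∈ T, ((w1 ℓ % pp ℓ : ℕ) : ℚ) / pp ℓ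
      = ∑ ℓ ∈ T, ((w2 ℓ % pp ℓ : ℕ) : ℚ) / pp ℓ :=
    Finset.sum_congr rfl (fun ℓ hℓ => by rw [hmod ℓ hℓ])
  have hN : NDivT T w1 = NDivT T w2 := by
    have := hW
    rw [WSum_split, WSum_split, hMQ] at this
    have h' : ((NDivT T w1 : ℕ) : ℚ) = ((NDivT T w2 : ℕ) : ℚ) := by linarith
    exact_mod_cast h'
  rw [NDivT_ext hs1 h1, NDivT_ext hs2 h2] at hN
  rw [TModT_ext hs1 h1, TModT_ext hs2 h2] at hTM
  exact ⟨hN, hTM⟩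

lemma NDivT_mono (S : Finset ℕ) (w w' : ℕ → ℕ) :
    NDivT S w ≤ NDivT S (fun ℓ => w ℓ + w' ℓ) :=
  Finset.sum_le_sum (fun ℓ _ => Nat.div_le_div_right (Nat.le_add_right _ _))

lemma TModT_step (S : Finset ℕ) (w w' : ℕ → ℕ)
    (hN : NDivT S (fun ℓ => w ℓ + w' ℓ) = NDivT S w) :
    TModT S (fun ℓ => w ℓ + w' ℓ) = TModT S w + ∑ ℓ ∈ S, w' ℓ := by
  have hle : ∀ ℓ ∈ S, w ℓ / pp ℓ ≤ (w ℓ + w' ℓ) / pp ℓ :=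
    fun ℓ _ => Nat.div_le_div_right (Nat.le_add_right _ _)
  have hpt : ∀ ℓ ∈ S, (w ℓ + w' ℓ) / pp ℓ = w ℓ / pp ℓ := by
    intro ℓ hℓ
    have := (Finset.sum_eq_sum_iff_of_le hle).1 hN.symm ℓ hℓ
    omega
  rw [TModT, TModT, ← Finset.sum_add_distrib]
  refine Finset.sum_congr rfl (fun ℓ hℓ => ?_)
  have e1 := Nat.div_add_mod (w ℓ + w' ℓ) (pp ℓ)
  have e2 := Nat.div_add_mod (w ℓ) (pp ℓ)
  rw [hpt ℓ hℓ] at e1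
  generalize pp ℓ * (w ℓ / pp ℓ) = tt at e1 e2
  omega

lemma eventually_min (g : ℕ → ℕ) (hg : ∀ n, g (n + 1) ≤ g n) :
    ∃ N, ∀ n ≥ N, g n = g N := by
  have hanti : ∀ m n, m ≤ n → g n ≤ g m := fun m n h => by
    induction h with
    | refl => exact le_refl _
    | step _ ih => exact le_trans (hg _) ih
  have hne : (Set.range g).Nonempty := ⟨g 0, ⟨0, rfl⟩⟩
  obtain ⟨N, hN⟩ := Nat.sInf_mem hne
  refine ⟨N, fun n hn => le_antisymm (hanti N n hn) ?_⟩
  rw [hN]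
  exact Nat.sInf_le ⟨n, rfl⟩

theorem accp : AddACCP (MM L) := by
  intro f hf hstep
  choose c hcM hceq using hstep
  have hrep : ∀ n, ∃ S w, Vanish S w ∧ f n = WSum S w := by
    intro n
    obtain ⟨S, x, y, _, h0, hr⟩ := mem_rep (hf n)
    exact ⟨S, fun ℓ => x ℓ * rr ℓ + 2 * y ℓ,
      fun ℓ hℓ => by obtain ⟨hx, hy⟩ := h0 ℓ hℓ; simp [hx, hy], hr⟩
  choose Sf wf hvf hwf using hrep
  have hrepc : ∀ n, ∃ S w, Vanish S w ∧ c n = WSum S w := by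
    intro n
    obtain ⟨S, x, y, _, h0, hr⟩ := mem_rep (hcM n)
    exact ⟨S, fun ℓ => x ℓ * rr ℓ + 2 * y ℓ,
      fun ℓ hℓ => by obtain ⟨hx, hy⟩ := h0 ℓ hℓ; simp [hx, hy], hr⟩
  choose Sc wc hvc hwc using hrepc
  -- the combined representation of `f n`
  set U : ℕ → Finset ℕ := fun n => Sf (n + 1) ∪ Sc n with hU
  set wU : ℕ → ℕ → ℕ := fun n ℓ => wf (n + 1) ℓ + wc n ℓ with hwU
  have hvU : ∀ n, Vanish (U n) (wU n) := by
    intro n ℓ hℓ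
    have h1 : ℓ ∉ Sf (n + 1) := fun hc => hℓ (Finset.mem_union_left _ hc)
    have h2 : ℓ ∉ Sc n := fun hc => hℓ (Finset.mem_union_right _ hc)
    simp [hwU, hvf (n + 1) ℓ h1, hvc n ℓ h2]
  have hUeq : ∀ n, f n = WSum (U n) (wU n) := by
    intro n
    rw [hceq n, hwf (n + 1), hwc n,
      ← WSum_ext (Finset.subset_union_left (s₂ := Sc n)) (hvf (n + 1)),
      ← WSum_ext (Finset.subset_union_right (s₁ := Sf (n + 1))) (hvc n)]
    rw [WSum, WSum, WSum, ← Finset.sum_add_distrib]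
    refine Finset.sum_congr rfl (fun ℓ _ => ?_)
    rw [← add_div]
    congr 1
    push_cast [hwU]
    ring
  have hinv : ∀ n, NDivT (Sf n) (wf n) = NDivT (U n) (wU n)
      ∧ TModT (Sf n) (wf n) = TModT (U n) (wU n) := by
    intro n
    exact invariants_eq (hvf n) (hvU n) (by rw [← hwf n, hUeq n])
  set g : ℕ → ℕ := fun n => NDivT (Sf n) (wf n) with hg
  set t : ℕ → ℕ := fun n => TModT (Sf n) (wf n) with ht
  have hNf : ∀ n, NDivT (U n) (wU n) = NDivT (U n) (fun ℓ => wf (n + 1) ℓ + wc n ℓ) := fun n => rfl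
  have hgstep : ∀ n, g (n + 1) ≤ g n := by
    intro n
    calc g (n + 1) = NDivT (U n) (wf (n + 1)) :=
          (NDivT_ext Finset.subset_union_left (hvf (n + 1))).symm
      _ ≤ NDivT (U n) (fun ℓ => wf (n + 1) ℓ + wc n ℓ) := NDivT_mono _ _ _
      _ = g n := ((hinv n).1).symm
  obtain ⟨N1, hN1⟩ := eventually_min g hgstep
  -- after N1 the first invariant is constant, so carries vanish
  have hstep2 : ∀ n ≥ N1, TModT (U n) (wU n)
      = TModT (U n) (wf (n + 1)) + ∑ ℓ ∈ U n, wc n ℓ := by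
    intro n hn
    have e1 : g (n + 1) = g n := by rw [hN1 (n + 1) (le_trans hn (Nat.le_succ n)), hN1 n hn]
    have e2 : NDivT (U n) (fun ℓ => wf (n + 1) ℓ + wc n ℓ) = NDivT (U n) (wf (n + 1)) := by
      have h3 : NDivT (U n) (wU n) = g n := ((hinv n).1).symm
      have h4 : NDivT (U n) (wf (n + 1)) = g (n + 1) :=
        NDivT_ext Finset.subset_union_left (hvf (n + 1))
      calc NDivT (U n) (fun ℓ => wf (n + 1) ℓ + wc n ℓ) = g n := h3
        _ = g (n + 1) := e1.symm
        _ = NDivT (U n) (wf (n + 1)) := h4.symm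
    exact TModT_step (U n) (wf (n + 1)) (wc n) e2
  have htstep : ∀ n ≥ N1, t (n + 1) ≤ t n := by
    intro n hn
    calc t (n + 1) = TModT (U n) (wf (n + 1)) :=
          (TModT_ext Finset.subset_union_left (hvf (n + 1))).symm
      _ ≤ TModT (U n) (wU n) := by rw [hstep2 n hn]; exact Nat.le_add_right _ _
      _ = t n := ((hinv n).2).symm
  obtain ⟨N2, hN2⟩ := eventually_min (fun k => t (N1 + k)) (fun k => htstep _ (Nat.le_add_right _ _))
  set N := N1 + N2 with hN
  have hczero : ∀ n ≥ N, c n = 0 := by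
    intro n hn
    have hnN1 : N1 ≤ n := le_trans (Nat.le_add_right _ _) hn
    have ht1 : t n = t (n + 1) := by
      obtain ⟨k, rfl⟩ := Nat.exists_eq_add_of_le hn
      have e1 : t (N1 + (N2 + k)) = t (N1 + N2) := hN2 (N2 + k) (Nat.le_add_right _ _)
      have e2 : t (N1 + (N2 + (k + 1))) = t (N1 + N2) :=
        hN2 (N2 + (k + 1)) (Nat.le_add_right _ _)
      have a1 : N1 + (N2 + k) = N + k := by omega
      have a2 : N1 + (N2 + (k + 1)) = N + k + 1 := by omega
      rw [a1] at e1
      rw [a2] at e2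
      rw [e1, e2]
    have e2 := hstep2 n hnN1
    have h7 : TModT (U n) (wU n) = t n := ((hinv n).2).symm
    have h8 : TModT (U n) (wf (n + 1)) = t (n + 1) :=
      TModT_ext Finset.subset_union_left (hvf (n + 1))
    have h9 : ∑ ℓ ∈ U n, wc n ℓ = 0 := by omega
    rw [hwc n, WSum]
    refine Finset.sum_eq_zero (fun ℓ hℓ => ?_)
    rw [Finset.sum_eq_zero_iff.1 h9 ℓ (Finset.mem_union_right _ hℓ)]
    simp
  have hfeq : ∀ n ≥ N, f n = f N := by
    intro n hn
    refine Nat.le_induction rfl ?_ n hn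
    intro m hm ih
    have : f m = f (m + 1) := by rw [hceq m, hczero m hm, add_zero]
    rw [← this]
    exact ih
  exact ⟨N, fun n hn => ⟨0, (MM L).zero_mem, by rw [hfeq n hn, add_zero]⟩⟩

end ACCPsec

end Stmt15

theorem stmt15 (L : Set ℕ) (hne : L.Nonempty) (h2 : ∀ ℓ ∈ L, 2 ≤ ℓ) :
    ∃ M : AddSubmonoid ℚ,
      (∀ x ∈ M, 0 ≤ x) ∧ AddACCP M ∧ (1 : ℚ) ∈ M ∧ LengthSet M 1 = L :=
  ⟨Stmt15.MM L, fun _ hx => Stmt15.MM_nonneg hx, Stmt15.accp,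
    Stmt15.one_mem hne h2, Stmt15.length_eq h2⟩
end

section
/- There exist a ℚ-vector space V and a submonoid M of V contained in a positive cone, such that M satisfies the ACCP and for every nonempty subset L ⊆ ℕ_{≥2} there is an element b_L ∈ M with L_M(b_L) = L. Moreover, if min L > 2, then there are uncountably many elements b ∈ M with L_M(b) = L. -/
open Finsupp

/-- A prime in `(2^ℓ, 2^(ℓ+1)]`. -/
noncomputable def qp (ℓ : ℕ) : ℕ :=
  (Nat.exists_prime_lt_and_le_two_mul (2 ^ ℓ) (by positivity)).choose

lemma qp_prime (ℓ : ℕ) : (qp ℓ).Prime :=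
  (Nat.exists_prime_lt_and_le_two_mul (2 ^ ℓ) (by positivity)).choose_spec.1

lemma qp_gt (ℓ : ℕ) : 2 ^ ℓ < qp ℓ :=
  (Nat.exists_prime_lt_and_le_two_mul (2 ^ ℓ) (by positivity)).choose_spec.2.1

lemma qp_le (ℓ : ℕ) : qp ℓ ≤ 2 ^ (ℓ + 1) := by
  have := (Nat.exists_prime_lt_and_le_two_mul (2 ^ ℓ) (by positivity : (2:ℕ)^ℓ ≠ 0)).choose_spec.2.2
  exact this.trans_eq (by ring)

lemma qp_pos (ℓ : ℕ) : 0 < qp ℓ := (qp_prime ℓ).pos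

lemma qp_two_le (ℓ : ℕ) : 2 ≤ qp ℓ := (qp_prime ℓ).two_le

lemma self_lt_qp (ℓ : ℕ) : ℓ < qp ℓ := lt_of_le_of_lt (Nat.lt_two_pow_self (n := ℓ)).le (qp_gt ℓ)

lemma qp_strictMono : StrictMono qp := by
  intro a b hab
  calc qp a ≤ 2 ^ (a + 1) := qp_le a
    _ ≤ 2 ^ b := Nat.pow_le_pow_right (by norm_num) hab
    _ < qp b := qp_gt b

lemma qp_injective : Function.Injective qp := qp_strictMono.injective

/-- numerator of the `u` generator -/
noncomputable def cu (ℓ : ℕ) : ℕ := qp ℓ - (ℓ - 1)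

lemma cu_add (ℓ : ℕ) : cu ℓ + (ℓ - 1) = qp ℓ := by
  have h := self_lt_qp ℓ
  have : ℓ - 1 ≤ qp ℓ := by omega
  simp [cu]; omega

lemma cu_pos (ℓ : ℕ) : 0 < cu ℓ := by
  have h := self_lt_qp ℓ
  simp [cu]; omega

lemma cu_lt (ℓ : ℕ) (h2 : 2 ≤ ℓ) : cu ℓ < qp ℓ := by
  have h := self_lt_qp ℓ
  simp [cu]; omega

/-- `Σ n ℓ / qp ℓ` as a rational. -/
noncomputable def Srec (n : ℕ →₀ ℕ) : ℚ := n.sum fun ℓ a => (a : ℚ) / (qp ℓ)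

lemma Srec_zero : Srec 0 = 0 := by simp [Srec]

lemma Srec_add (a b : ℕ →₀ ℕ) : Srec (a + b) = Srec a + Srec b := by
  unfold Srec
  exact Finsupp.sum_add_index' (by simp) (by intros; push_cast; ring)

lemma Srec_single (ℓ t : ℕ) : Srec (Finsupp.single ℓ t) = (t : ℚ) / qp ℓ := by
  unfold Srec
  exact Finsupp.sum_single_index (by simp)

lemma Srec_eq_sum (n : ℕ →₀ ℕ) {s : Finset ℕ} (hs : n.support ⊆ s) :
    Srec n = ∑ ℓ ∈ s, (n ℓ : ℚ) / qp ℓ := by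
  unfold Srec Finsupp.sum
  refine Finset.sum_subset hs ?_
  intro x _ hx
  simp [Finsupp.notMem_support_iff.mp hx]

lemma Srec_nonneg (n : ℕ →₀ ℕ) : 0 ≤ Srec n := by
  unfold Srec Finsupp.sum
  refine Finset.sum_nonneg ?_
  intro i _
  positivity

lemma Srec_eq_zero_iff (n : ℕ →₀ ℕ) : Srec n = 0 ↔ n = 0 := by
  constructor
  · intro h
    ext ℓ
    by_contra hne
    have hne' : n ℓ ≠ 0 := by simpa using hne
    have hℓ : ℓ ∈ n.support := Finsupp.mem_support_iff.mpr hne'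
    have hpos : (0:ℚ) < (n ℓ : ℚ) / qp ℓ := by
      have h1 : (0:ℚ) < (n ℓ : ℚ) := by exact_mod_cast Nat.pos_of_ne_zero hne'
      have h2 : (0:ℚ) < (qp ℓ : ℚ) := by exact_mod_cast qp_pos ℓ
      positivity
    have hlt : 0 < Srec n := by
      unfold Srec Finsupp.sum
      refine Finset.sum_pos' ?_ ⟨ℓ, hℓ, hpos⟩
      intro i _; positivity
    rw [h] at hlt; exact lt_irrefl _ hlt
  · rintro rfl; exact Srec_zero

/-- pointwise `mod` of a finsupp by `qp` -/
noncomputable def nmod (n : ℕ →₀ ℕ) : ℕ →₀ ℕ :=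
  Finsupp.onFinset n.support (fun ℓ => n ℓ % qp ℓ)
    (fun ℓ h => Finsupp.mem_support_iff.mpr (fun h0 => h (by simp [h0])))

@[simp] lemma nmod_apply (n : ℕ →₀ ℕ) (ℓ : ℕ) : nmod n ℓ = n ℓ % qp ℓ := rfl

lemma nmod_lt (n : ℕ →₀ ℕ) (ℓ : ℕ) : nmod n ℓ < qp ℓ := Nat.mod_lt _ (qp_pos ℓ)

lemma nmod_support_subset (n : ℕ →₀ ℕ) : (nmod n).support ⊆ n.support :=
  Finsupp.support_onFinset_subset

/-- the integer part `Σ ⌊n ℓ / qp ℓ⌋` -/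
noncomputable def Zf (n : ℕ →₀ ℕ) : ℕ := n.sum fun ℓ a => a / qp ℓ

lemma Zf_eq_sum (n : ℕ →₀ ℕ) {s : Finset ℕ} (hs : n.support ⊆ s) :
    Zf n = ∑ ℓ ∈ s, n ℓ / qp ℓ := by
  unfold Zf Finsupp.sum
  refine Finset.sum_subset hs ?_
  intro x _ hx
  simp [Finsupp.notMem_support_iff.mp hx]

lemma Dig (n : ℕ →₀ ℕ) : Srec n = (Zf n : ℚ) + Srec (nmod n) := by
  rw [Srec_eq_sum n (subset_refl _), Srec_eq_sum (nmod n) (nmod_support_subset n),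
    Zf_eq_sum n (subset_refl _)]
  push_cast
  rw [← Finset.sum_add_distrib]
  refine Finset.sum_congr rfl ?_
  intro ℓ _
  have hq : (qp ℓ : ℚ) ≠ 0 := by exact_mod_cast (qp_pos ℓ).ne'
  have h : ((n ℓ : ℚ)) = (qp ℓ) * ((n ℓ / qp ℓ : ℕ) : ℚ) + ((n ℓ % qp ℓ : ℕ) : ℚ) := by
    exact_mod_cast (Nat.div_add_mod (n ℓ) (qp ℓ)).symm
  rw [h, add_div, mul_div_assoc, mul_comm ((qp ℓ : ℚ)) _, div_mul_cancel₀ _ hq]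
  simp

/-- denominators of a sum avoiding `ℓ0`'s prime -/
lemma den_coprime (ℓ0 : ℕ) (g : ℕ → ℤ) (s : Finset ℕ) (hs : ℓ0 ∉ s) :
    ∃ A B : ℤ, ¬ ((qp ℓ0 : ℤ) ∣ B) ∧ B ≠ 0 ∧
      ∑ ℓ ∈ s, (g ℓ : ℚ) / (qp ℓ) = (A : ℚ) / (B : ℚ) := by
  classical
  induction s using Finset.induction_on with
  | empty =>
    refine ⟨0, 1, ?_, one_ne_zero, by simp⟩
    exact (Int.prime_iff_natAbs_prime.mpr (by simpa using qp_prime ℓ0)).not_dvd_one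
  | @insert a t hat ih =>
    have hℓ0a : ℓ0 ≠ a := fun h => hs (h ▸ Finset.mem_insert_self a t)
    obtain ⟨A, B, hB, hB0, hsum⟩ := ih (fun h => hs (Finset.mem_insert_of_mem h))
    refine ⟨g a * B + A * qp a, qp a * B, ?_, ?_, ?_⟩
    · intro hdvd
      rcases (Int.Prime.dvd_mul' (by exact_mod_cast qp_prime ℓ0) hdvd) with h | h
      · have : qp ℓ0 = qp a := by
          have := Int.ofNat_dvd.mp (by exact_mod_cast h)
          exact ((Nat.prime_dvd_prime_iff_eq (qp_prime ℓ0) (qp_prime a)).mp this)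
        exact hℓ0a (qp_injective this)
      · exact hB h
    · have : (qp a : ℤ) ≠ 0 := by exact_mod_cast (qp_pos a).ne'
      exact mul_ne_zero this hB0
    · rw [Finset.sum_insert hat, hsum]
      have h1 : (qp a : ℚ) ≠ 0 := by exact_mod_cast (qp_pos a).ne'
      have h2 : (B : ℚ) ≠ 0 := by exact_mod_cast hB0
      field_simp
      try push_cast
      try ring

/-- Master Lemma: two digit-vectors with the same fractional sum mod 1 coincide. -/
lemma ML (a b : ℕ →₀ ℕ) (ha : ∀ ℓ, a ℓ < qp ℓ) (hb : ∀ ℓ, b ℓ < qp ℓ)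
    (z : ℤ) (h : Srec a - Srec b = (z : ℚ)) : a = b := by
  classical
  ext ℓ0
  by_contra hne
  set s : Finset ℕ := a.support ∪ b.support with hsdef
  have hℓ0 : ℓ0 ∈ s := by
    rcases Nat.eq_zero_or_pos (a ℓ0) with h0 | h0
    · have : b ℓ0 ≠ 0 := fun hb0 => hne (by rw [h0, hb0])
      exact Finset.mem_union_right _ (Finsupp.mem_support_iff.mpr this)
    · exact Finset.mem_union_left _ (Finsupp.mem_support_iff.mpr h0.ne')
  have hsa : a.support ⊆ s := Finset.subset_union_left
  have hsb : b.support ⊆ s := Finset.subset_union_right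
  set g : ℕ → ℤ := fun ℓ => (a ℓ : ℤ) - (b ℓ : ℤ) with hg
  have hsum : Srec a - Srec b = ∑ ℓ ∈ s, (g ℓ : ℚ) / qp ℓ := by
    rw [Srec_eq_sum a hsa, Srec_eq_sum b hsb, ← Finset.sum_sub_distrib]
    refine Finset.sum_congr rfl ?_
    intro ℓ _
    push_cast [hg]
    ring
  have hsplit : ∑ ℓ ∈ s, (g ℓ : ℚ) / qp ℓ
      = (g ℓ0 : ℚ) / qp ℓ0 + ∑ ℓ ∈ s.erase ℓ0, (g ℓ : ℚ) / qp ℓ := by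
    rw [← Finset.add_sum_erase _ _ hℓ0]
  obtain ⟨A, B, hBnd, hB0, hAB⟩ := den_coprime ℓ0 g (s.erase ℓ0) (Finset.notMem_erase _ _)
  have hq : (qp ℓ0 : ℚ) ≠ 0 := by exact_mod_cast (qp_pos ℓ0).ne'
  have hBQ : (B : ℚ) ≠ 0 := by exact_mod_cast hB0
  have key : (g ℓ0) * B = (qp ℓ0 : ℤ) * (z * B - A) := by
    have : (g ℓ0 : ℚ) / qp ℓ0 + (A : ℚ) / B = (z : ℚ) := by
      rw [← hAB, ← hsplit, ← hsum, h]
    have h2 : (g ℓ0 : ℚ) * B = (qp ℓ0 : ℚ) * ((z : ℚ) * B - A) := by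
      field_simp at this
      linarith [this]
    exact_mod_cast h2
  have hdvd : (qp ℓ0 : ℤ) ∣ g ℓ0 * B := ⟨z * B - A, key⟩
  have hdvd2 : (qp ℓ0 : ℤ) ∣ g ℓ0 := by
    rcases (Int.Prime.dvd_mul' (by exact_mod_cast qp_prime ℓ0) hdvd) with h | h
    · exact h
    · exact absurd h hBnd
  have hlt : (g ℓ0).natAbs < qp ℓ0 := by
    have h1 := ha ℓ0
    have h2 := hb ℓ0
    simp only [hg]
    omega
  have hnz : g ℓ0 ≠ 0 := by
    simp only [hg]
    omega
  have h3 : qp ℓ0 ∣ (g ℓ0).natAbs := by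
    have := Int.natAbs_dvd_natAbs.mpr hdvd2
    simpa using this
  have h4 : (g ℓ0).natAbs ≠ 0 := Int.natAbs_ne_zero.mpr hnz
  have := Nat.le_of_dvd (Nat.pos_of_ne_zero h4) h3
  omega

lemma nmod_eq_self (n : ℕ →₀ ℕ) (h : Zf n = 0) : nmod n = n := by
  have hall : ∀ ℓ ∈ n.support, n ℓ / qp ℓ = 0 := by
    rw [Zf_eq_sum n (subset_refl _)] at h
    exact fun ℓ hℓ => Finset.sum_eq_zero_iff.mp h ℓ hℓ
  ext ℓ
  rcases Finset.decidableMem ℓ n.support with hm | hm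
  · simp [Finsupp.notMem_support_iff.mp hm]
  · have := hall ℓ hm
    have hlt : n ℓ < qp ℓ := by
      rcases Nat.lt_or_ge (n ℓ) (qp ℓ) with h' | h'
      · exact h'
      · exact absurd ((Nat.div_eq_zero_iff.mp this).resolve_left (qp_pos ℓ).ne') (by omega)
    simp [Nat.mod_eq_of_lt hlt]

/-- Unique small representation: if `Srec n = t / qp ℓ0` with `t < qp ℓ0`,
then `n = single ℓ0 t`. -/
lemma small_rep (n : ℕ →₀ ℕ) (ℓ0 t : ℕ) (ht : t < qp ℓ0)
    (h : Srec n = (t : ℚ) / qp ℓ0) : n = Finsupp.single ℓ0 t := by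
  have hd := Dig n
  have hml : nmod n = Finsupp.single ℓ0 t := by
    refine ML _ _ (fun ℓ => nmod_lt n ℓ) ?_ (-(Zf n : ℤ)) ?_
    · intro ℓ
      rcases eq_or_ne ℓ ℓ0 with rfl | hne
      · simpa [Finsupp.single_apply] using ht
      · simp [Finsupp.single_apply, Ne.symm hne]
        exact qp_pos ℓ
    · rw [Srec_single]
      push_cast
      linarith [hd, h]
  have hz : Zf n = 0 := by
    have : Srec n = (Zf n : ℚ) + (t : ℚ) / qp ℓ0 := by rw [hd, hml, Srec_single]
    rw [h] at this
    have : (Zf n : ℚ) = 0 := by linarith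
    exact_mod_cast this
  rw [← nmod_eq_self n hz, hml]

lemma nat_sum_eq_one {s : Finset ℕ} {f : ℕ → ℕ} (h : ∑ i ∈ s, f i = 1) :
    ∃ i ∈ s, f i = 1 ∧ ∀ j ∈ s, j ≠ i → f j = 0 := by
  classical
  have hne : ∃ i ∈ s, f i ≠ 0 := by
    by_contra hc
    push_neg at hc
    rw [Finset.sum_eq_zero hc] at h
    omega
  obtain ⟨i, his, hfi⟩ := hne
  have hsplit : f i + ∑ j ∈ s.erase i, f j = 1 := by
    rw [Finset.add_sum_erase _ _ his, h]
  have hrest : ∑ j ∈ s.erase i, f j = 0 := by omega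
  refine ⟨i, his, by omega, ?_⟩
  intro j hjs hji
  exact Finset.sum_eq_zero_iff.mp hrest j (Finset.mem_erase.mpr ⟨hji, hjs⟩)

/-- If `Srec n = 1` then `n` is `qp ℓ1` at a single point `ℓ1`. -/
lemma one_rep (n : ℕ →₀ ℕ) (h : Srec n = 1) :
    ∃ ℓ1 ∈ n.support, n = Finsupp.single ℓ1 (qp ℓ1) := by
  have hd := Dig n
  have hml : nmod n = 0 := by
    refine ML _ _ (fun ℓ => nmod_lt n ℓ) (fun ℓ => by simp [qp_pos ℓ]) (1 - (Zf n : ℤ)) ?_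
    rw [Srec_zero]
    push_cast
    linarith
  have hz : Zf n = 1 := by
    have : (Zf n : ℚ) = 1 := by rw [hml, Srec_zero] at hd; linarith
    exact_mod_cast this
  rw [Zf_eq_sum n (subset_refl _)] at hz
  obtain ⟨ℓ1, hℓ1, hone, hrest⟩ := nat_sum_eq_one hz
  have hmod : ∀ ℓ, n ℓ % qp ℓ = 0 := by
    intro ℓ
    have := congrArg (fun g => g ℓ) hml
    simpa using this
  refine ⟨ℓ1, hℓ1, ?_⟩
  ext ℓ
  rcases eq_or_ne ℓ ℓ1 with rfl | hne
  · have h1 := hmod ℓ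
    have h2 := Nat.div_add_mod (n ℓ) (qp ℓ)
    have h4 : n ℓ / qp ℓ = 1 := hone
    rw [h4, h1] at h2
    simp [Finsupp.single_apply]
    omega
  · simp [Finsupp.single_apply, Ne.symm hne]
    rcases Finset.decidableMem ℓ n.support with hm | hm
    · exact Finsupp.notMem_support_iff.mp hm
    · have h1 := hrest ℓ hm hne
      have h2 := hmod ℓ
      have h3 := Nat.div_add_mod (n ℓ) (qp ℓ)
      rw [h1, h2] at h3
      simpa using h3.symm

/-- total mass of a finsupp -/
def Tot (k : ℕ →₀ ℕ) : ℕ := k.sum fun _ a => a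

lemma Tot_add (a b : ℕ →₀ ℕ) : Tot (a + b) = Tot a + Tot b :=
  Finsupp.sum_add_index' (by simp) (by simp)

@[simp] lemma Tot_zero : Tot 0 = 0 := by simp [Tot]

@[simp] lemma Tot_single (ℓ t : ℕ) : Tot (Finsupp.single ℓ t) = t :=
  Finsupp.sum_single_index rfl

lemma Tot_eq_zero {k : ℕ →₀ ℕ} (h : Tot k = 0) : k = 0 := by
  ext ℓ
  rcases Finset.decidableMem ℓ k.support with hm | hm
  · simpa using Finsupp.notMem_support_iff.mp hm
  · unfold Tot Finsupp.sum at h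
    have := Finset.sum_eq_zero_iff.mp h ℓ hm
    simpa using this

lemma Tot_eq_one {k : ℕ →₀ ℕ} (h : Tot k = 1) : ∃ ℓ ∈ k.support, k = Finsupp.single ℓ 1 := by
  unfold Tot Finsupp.sum at h
  obtain ⟨i, his, hone, hrest⟩ := nat_sum_eq_one h
  refine ⟨i, his, ?_⟩
  ext ℓ
  rcases eq_or_ne ℓ i with rfl | hne
  · simpa [Finsupp.single_apply] using hone
  · simp [Finsupp.single_apply, Ne.symm hne]
    rcases Finset.decidableMem ℓ k.support with hm | hm
    · exact Finsupp.notMem_support_iff.mp hm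
    · exact hrest ℓ hm hne

/-- scale a `k`-vector by the `cu` numerators -/
noncomputable def kc (k : ℕ →₀ ℕ) : ℕ →₀ ℕ :=
  Finsupp.onFinset k.support (fun ℓ => k ℓ * cu ℓ)
    (fun ℓ h => Finsupp.mem_support_iff.mpr (fun h0 => h (by simp [h0])))

@[simp] lemma kc_apply (k : ℕ →₀ ℕ) (ℓ : ℕ) : kc k ℓ = k ℓ * cu ℓ := rfl

lemma kc_add (a b : ℕ →₀ ℕ) : kc (a + b) = kc a + kc b := by
  ext ℓ; simp [add_mul]

@[simp] lemma kc_zero : kc 0 = 0 := by ext ℓ; simp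

lemma kc_single (ℓ t : ℕ) : kc (Finsupp.single ℓ t) = Finsupp.single ℓ (t * cu ℓ) := by
  ext j
  rcases eq_or_ne j ℓ with rfl | hne
  · simp
  · simp [Finsupp.single_apply, Ne.symm hne]

/-- the element of `ℚ × ℚ` represented by counts `k` (of `u`-atoms) and `m` (of `v`-atoms) -/
noncomputable def F (k m : ℕ →₀ ℕ) : ℚ × ℚ := ((Tot k : ℚ), Srec (kc k + m))

lemma F_add (k₁ m₁ k₂ m₂ : ℕ →₀ ℕ) : F (k₁ + k₂) (m₁ + m₂) = F k₁ m₁ + F k₂ m₂ := by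
  unfold F
  rw [Prod.mk_add_mk]
  congr 1
  · rw [Tot_add]; push_cast; ring
  · rw [kc_add]
    have : kc k₁ + kc k₂ + (m₁ + m₂) = (kc k₁ + m₁) + (kc k₂ + m₂) := by abel
    rw [this, Srec_add]

@[simp] lemma F_zero : F 0 0 = 0 := by simp [F, Srec_zero, Prod.ext_iff]

/-- the "u" generator -/
noncomputable def uu (ℓ : ℕ) : ℚ × ℚ := (1, (cu ℓ : ℚ) / qp ℓ)
/-- the "v" generator -/
noncomputable def vv (ℓ : ℕ) : ℚ × ℚ := (0, 1 / (qp ℓ : ℚ))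

lemma F_u (ℓ : ℕ) : F (Finsupp.single ℓ 1) 0 = uu ℓ := by
  simp [F, uu, kc_single, Srec_single]

lemma F_v (ℓ : ℕ) : F 0 (Finsupp.single ℓ 1) = vv ℓ := by
  simp [F, vv, Srec_single]

/-- cleaned-up version of `L` -/
def SL (L : Set ℕ) : Set ℕ := {ℓ | ℓ ∈ L ∧ 2 ≤ ℓ}

/-- the 2-dimensional monoid realizing length set `SL L` -/
noncomputable def MM (L : Set ℕ) : AddSubmonoid (ℚ × ℚ) where
  carrier := {x | ∃ k m : ℕ →₀ ℕ, ↑k.support ⊆ SL L ∧ ↑m.support ⊆ SL L ∧ x = F k m}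
  zero_mem' := ⟨0, 0, by simp, by simp, by simp⟩
  add_mem' := by
    rintro x y ⟨k₁, m₁, hk₁, hm₁, rfl⟩ ⟨k₂, m₂, hk₂, hm₂, rfl⟩
    refine ⟨k₁ + k₂, m₁ + m₂, ?_, ?_, (F_add k₁ m₁ k₂ m₂).symm⟩
    · refine subset_trans (Finset.coe_subset.mpr Finsupp.support_add) ?_
      rw [Finset.coe_union]
      exact Set.union_subset hk₁ hk₂
    · refine subset_trans (Finset.coe_subset.mpr Finsupp.support_add) ?_
      rw [Finset.coe_union]
      exact Set.union_subset hm₁ hm₂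

lemma mem_MM_iff {L : Set ℕ} {x : ℚ × ℚ} :
    x ∈ MM L ↔ ∃ k m : ℕ →₀ ℕ, ↑k.support ⊆ SL L ∧ ↑m.support ⊆ SL L ∧ x = F k m :=
  Iff.rfl

lemma uu_mem {L : Set ℕ} {ℓ : ℕ} (h : ℓ ∈ SL L) : uu ℓ ∈ MM L := by
  refine ⟨Finsupp.single ℓ 1, 0, ?_, by simp, (F_u ℓ).symm⟩
  refine subset_trans (Finset.coe_subset.mpr Finsupp.support_single_subset) ?_
  simpa using h

lemma vv_mem {L : Set ℕ} {ℓ : ℕ} (h : ℓ ∈ SL L) : vv ℓ ∈ MM L := by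
  refine ⟨0, Finsupp.single ℓ 1, by simp, ?_, (F_v ℓ).symm⟩
  refine subset_trans (Finset.coe_subset.mpr Finsupp.support_single_subset) ?_
  simpa using h

lemma MM_nonneg {L : Set ℕ} {x : ℚ × ℚ} (h : x ∈ MM L) : 0 ≤ x.1 ∧ 0 ≤ x.2 := by
  obtain ⟨k, m, _, _, rfl⟩ := h
  exact ⟨Nat.cast_nonneg _, Srec_nonneg _⟩

lemma F_eq_zero_iff (k m : ℕ →₀ ℕ) : F k m = 0 ↔ k = 0 ∧ m = 0 := by
  constructor
  · intro h
    have h1 : (Tot k : ℚ) = 0 := congrArg Prod.fst h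
    have h2 : Srec (kc k + m) = 0 := congrArg Prod.snd h
    have hk : k = 0 := Tot_eq_zero (by exact_mod_cast h1)
    rw [(Srec_eq_zero_iff _)] at h2
    have hm : m = 0 := by
      have := congrArg (fun n => n) h2
      rw [hk] at h2
      simpa using h2
    exact ⟨hk, hm⟩
  · rintro ⟨rfl, rfl⟩; exact F_zero

lemma uu_ne_zero (ℓ : ℕ) : uu ℓ ≠ 0 := by
  intro h
  have : (1 : ℚ) = 0 := congrArg Prod.fst h
  norm_num at this

lemma vv_ne_zero (ℓ : ℕ) : vv ℓ ≠ 0 := by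
  intro h
  have h2 : (1 / (qp ℓ : ℚ)) = 0 := congrArg Prod.snd h
  have : (qp ℓ : ℚ) ≠ 0 := by exact_mod_cast (qp_pos ℓ).ne'
  simp [this] at h2

lemma Tot_one_cases {k₁ k₂ : ℕ →₀ ℕ} (h : Tot k₁ + Tot k₂ = 1) :
    k₁ = 0 ∨ k₂ = 0 := by
  rcases Nat.eq_zero_or_pos (Tot k₁) with h0 | h0
  · exact Or.inl (Tot_eq_zero h0)
  · exact Or.inr (Tot_eq_zero (by omega))

/-- decomposition of `uu ℓ` in `MM L` is trivial -/
lemma u_dec {L : Set ℕ} {k m : ℕ →₀ ℕ} {ℓ : ℕ} (hℓ : ℓ ∈ SL L)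
    (hk : ↑k.support ⊆ SL L) (h : F k m = uu ℓ) :
    k = Finsupp.single ℓ 1 ∧ m = 0 := by
  have h1 : (Tot k : ℚ) = 1 := congrArg Prod.fst h
  have h2 : Srec (kc k + m) = (cu ℓ : ℚ) / qp ℓ := congrArg Prod.snd h
  have htot : Tot k = 1 := by exact_mod_cast h1
  obtain ⟨ℓ1, hℓ1s, rfl⟩ := Tot_eq_one htot
  rw [kc_single, one_mul] at h2
  have hsr := small_rep _ ℓ (cu ℓ) (cu_lt ℓ hℓ.2) h2
  have hℓ1 : ℓ1 = ℓ := by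
    by_contra hne
    have := congrArg (fun n => n ℓ1) hsr
    simp [Finsupp.single_apply, Ne.symm hne] at this
    have := cu_pos ℓ1
    omega
  subst hℓ1
  constructor
  · rfl
  · have : Finsupp.single ℓ1 (cu ℓ1) + m = Finsupp.single ℓ1 (cu ℓ1) := hsr
    exact add_eq_left.mp this

/-- decomposition of `(1,1)` in `MM L`: one `u ℓ` and `ℓ - 1` copies of `v ℓ` -/
lemma b_dec {L : Set ℕ} {k m : ℕ →₀ ℕ}
    (hk : ↑k.support ⊆ SL L) (h : F k m = (1, 1)) :
    ∃ ℓ ∈ SL L, k = Finsupp.single ℓ 1 ∧ m = Finsupp.single ℓ (ℓ - 1) := by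
  have h1 : (Tot k : ℚ) = 1 := congrArg Prod.fst h
  have h2 : Srec (kc k + m) = 1 := congrArg Prod.snd h
  have htot : Tot k = 1 := by exact_mod_cast h1
  obtain ⟨ℓ1, hℓ1s, rfl⟩ := Tot_eq_one htot
  rw [kc_single, one_mul] at h2
  obtain ⟨ℓ2, _, hrep⟩ := one_rep _ h2
  have hℓ2 : ℓ2 = ℓ1 := by
    by_contra hne
    have := congrArg (fun n => n ℓ1) hrep
    simp [Finsupp.single_apply, hne] at this
    have := cu_pos ℓ1
    omega
  rw [hℓ2] at hrep
  have hℓ1SL : ℓ1 ∈ SL L := hk (by simpa using hℓ1s)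
  refine ⟨ℓ1, hℓ1SL, rfl, ?_⟩
  have hcu := cu_add ℓ1
  ext j
  have := congrArg (fun n => n j) hrep
  rcases eq_or_ne j ℓ1 with rfl | hne
  · simp [Finsupp.single_apply] at this ⊢
    omega
  · simp [Finsupp.single_apply, Ne.symm hne] at this ⊢
    exact this

lemma MM_atom_u {L : Set ℕ} {ℓ : ℕ} (hℓ : ℓ ∈ SL L) : IsAtomOf (MM L) (uu ℓ) := by
  refine ⟨uu_mem hℓ, uu_ne_zero ℓ, ?_⟩
  rintro b ⟨k₁, m₁, hk₁, hm₁, rfl⟩ c ⟨k₂, m₂, hk₂, hm₂, rfl⟩ hsum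
  rw [← F_add] at hsum
  have hksupp : ↑(k₁ + k₂).support ⊆ SL L := by
    refine subset_trans (Finset.coe_subset.mpr Finsupp.support_add) ?_
    rw [Finset.coe_union]; exact Set.union_subset hk₁ hk₂
  obtain ⟨hkk, hmm⟩ := u_dec hℓ hksupp hsum
  have hmz : m₁ = 0 ∧ m₂ = 0 := by
    constructor <;> [skip; skip] <;>
    · ext j
      have := congrArg (fun n => n j) hmm
      simp at this
      simp only [Finsupp.coe_zero, Pi.zero_apply]
      omega
  have htot : Tot k₁ + Tot k₂ = 1 := by
    rw [← Tot_add, hkk, Tot_single]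
  rcases Tot_one_cases htot with h0 | h0
  · left; rw [h0, hmz.1, F_zero]
  · right; rw [h0, hmz.2, F_zero]

lemma MM_atom_v {L : Set ℕ} {ℓ : ℕ} (hℓ : ℓ ∈ SL L) : IsAtomOf (MM L) (vv ℓ) := by
  refine ⟨vv_mem hℓ, vv_ne_zero ℓ, ?_⟩
  rintro b ⟨k₁, m₁, hk₁, hm₁, rfl⟩ c ⟨k₂, m₂, hk₂, hm₂, rfl⟩ hsum
  rw [← F_add] at hsum
  have h1 : (Tot (k₁ + k₂) : ℚ) = 0 := congrArg Prod.fst hsum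
  have hk : k₁ + k₂ = 0 := Tot_eq_zero (by exact_mod_cast h1)
  have hk₁0 : k₁ = 0 := by
    ext j; have := congrArg (fun n => n j) hk; simp at this
    simp only [Finsupp.coe_zero, Pi.zero_apply]; omega
  have hk₂0 : k₂ = 0 := by
    ext j; have := congrArg (fun n => n j) hk; simp at this
    simp only [Finsupp.coe_zero, Pi.zero_apply]; omega
  have h2 : Srec (kc (k₁ + k₂) + (m₁ + m₂)) = 1 / (qp ℓ : ℚ) := congrArg Prod.snd hsum
  rw [hk, kc_zero, zero_add] at h2
  have hsr := small_rep _ ℓ 1 (qp_prime ℓ).one_lt (by simpa using h2)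
  have htot : Tot m₁ + Tot m₂ = 1 := by rw [← Tot_add, hsr, Tot_single]
  rcases Tot_one_cases htot with h0 | h0
  · left; rw [h0, hk₁0, F_zero]
  · right; rw [h0, hk₂0, F_zero]

/-- every atom of `MM L` is a generator -/
lemma MM_atom_gen {L : Set ℕ} {x : ℚ × ℚ} (hx : IsAtomOf (MM L) x) :
    ∃ ℓ ∈ SL L, x = uu ℓ ∨ x = vv ℓ := by
  obtain ⟨⟨k, m, hk, hm, rfl⟩, hne, hatom⟩ := hx
  rcases Nat.eq_zero_or_pos (Tot k) with hTk | hTk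
  · -- k = 0
    have hk0 : k = 0 := Tot_eq_zero hTk
    subst hk0
    have hm0 : m ≠ 0 := by
      intro h; exact hne (by rw [h]; exact F_zero)
    obtain ⟨ℓ0, hℓ0⟩ := Finsupp.support_nonempty_iff.mpr hm0
    have hmℓ0 : 1 ≤ m ℓ0 := Nat.one_le_iff_ne_zero.mpr (Finsupp.mem_support_iff.mp hℓ0)
    have hdec : m = Finsupp.single ℓ0 1 + (m - Finsupp.single ℓ0 1) := by
      ext j
      rcases eq_or_ne j ℓ0 with rfl | hne'
      · simp [Finsupp.single_apply]
        omega
      · simp [Finsupp.single_apply, Ne.symm hne']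
    have hsplit : F 0 m = vv ℓ0 + F 0 (m - Finsupp.single ℓ0 1) := by
      rw [← F_v, ← F_add]
      simp only [add_zero]
      rw [← hdec]
    have hℓ0SL : ℓ0 ∈ SL L := hm (by simpa using hℓ0)
    have hsub : ↑(m - Finsupp.single ℓ0 1).support ⊆ SL L :=
      subset_trans (Finset.coe_subset.mpr Finsupp.support_tsub) hm
    have := hatom (vv ℓ0) (vv_mem hℓ0SL) (F 0 (m - Finsupp.single ℓ0 1))
      ⟨0, _, by simp, hsub, rfl⟩ hsplit.symm
    rcases this with h0 | h0
    · exact absurd h0 (vv_ne_zero ℓ0)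
    · refine ⟨ℓ0, hℓ0SL, Or.inr ?_⟩
      rw [hsplit, h0, add_zero]
  · -- k ≠ 0
    have hk0 : k ≠ 0 := by intro h; rw [h] at hTk; simp at hTk
    obtain ⟨ℓ0, hℓ0⟩ := Finsupp.support_nonempty_iff.mpr hk0
    have hkℓ0 : 1 ≤ k ℓ0 := Nat.one_le_iff_ne_zero.mpr (Finsupp.mem_support_iff.mp hℓ0)
    have hdec : k = Finsupp.single ℓ0 1 + (k - Finsupp.single ℓ0 1) := by
      ext j
      rcases eq_or_ne j ℓ0 with rfl | hne'
      · simp [Finsupp.single_apply]; omega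
      · simp [Finsupp.single_apply, Ne.symm hne']
    have hsplit : F k m = uu ℓ0 + F (k - Finsupp.single ℓ0 1) m := by
      rw [← F_u, ← F_add]
      simp only [zero_add]
      rw [← hdec]
    have hℓ0SL : ℓ0 ∈ SL L := hk (by simpa using hℓ0)
    have hsub : ↑(k - Finsupp.single ℓ0 1).support ⊆ SL L :=
      subset_trans (Finset.coe_subset.mpr Finsupp.support_tsub) hk
    have := hatom (uu ℓ0) (uu_mem hℓ0SL) (F (k - Finsupp.single ℓ0 1) m)
      ⟨_, _, hsub, hm, rfl⟩ hsplit.symm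
    rcases this with h0 | h0
    · exact absurd h0 (uu_ne_zero ℓ0)
    · refine ⟨ℓ0, hℓ0SL, Or.inl ?_⟩
      rw [hsplit, h0, add_zero]

lemma ms_to_rep {L : Set ℕ} (s : Multiset (ℚ × ℚ))
    (hs : ∀ x ∈ s, ∃ ℓ ∈ SL L, x = uu ℓ ∨ x = vv ℓ) :
    ∃ k m : ℕ →₀ ℕ, ↑k.support ⊆ SL L ∧ ↑m.support ⊆ SL L ∧
      Multiset.card s = Tot k + Tot m ∧ s.sum = F k m := by
  induction s using Multiset.induction_on with
  | empty => exact ⟨0, 0, by simp, by simp, by simp, by simp⟩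
  | cons a s ih =>
    obtain ⟨k, m, hk, hm, hcard, hsum⟩ := ih (fun x hx => hs x (Multiset.mem_cons_of_mem hx))
    obtain ⟨ℓ, hℓ, hgen⟩ := hs a (Multiset.mem_cons_self a s)
    have hsingle : ↑(Finsupp.single ℓ (1:ℕ)).support ⊆ SL L := by
      refine subset_trans (Finset.coe_subset.mpr Finsupp.support_single_subset) ?_
      simpa using hℓ
    rcases hgen with rfl | rfl
    · refine ⟨Finsupp.single ℓ 1 + k, m, ?_, hm, ?_, ?_⟩
      · refine subset_trans (Finset.coe_subset.mpr Finsupp.support_add) ?_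
        rw [Finset.coe_union]; exact Set.union_subset hsingle hk
      · rw [Multiset.card_cons, hcard, Tot_add, Tot_single]; ring
      · rw [Multiset.sum_cons, hsum]
        have : Finsupp.single ℓ 1 + k = Finsupp.single ℓ 1 + k := rfl
        calc uu ℓ + F k m = F (Finsupp.single ℓ 1) 0 + F k m := by rw [F_u]
          _ = F (Finsupp.single ℓ 1 + k) (0 + m) := (F_add _ _ _ _).symm
          _ = F (Finsupp.single ℓ 1 + k) m := by rw [zero_add]
    · refine ⟨k, Finsupp.single ℓ 1 + m, hk, ?_, ?_, ?_⟩
      · refine subset_trans (Finset.coe_subset.mpr Finsupp.support_add) ?_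
        rw [Finset.coe_union]; exact Set.union_subset hsingle hm
      · rw [Multiset.card_cons, hcard, Tot_add, Tot_single]; ring
      · rw [Multiset.sum_cons, hsum]
        calc vv ℓ + F k m = F 0 (Finsupp.single ℓ 1) + F k m := by rw [F_v]
          _ = F (0 + k) (Finsupp.single ℓ 1 + m) := (F_add _ _ _ _).symm
          _ = F k (Finsupp.single ℓ 1 + m) := by rw [zero_add]

lemma uu_add_smul_vv {ℓ : ℕ} (h2 : 2 ≤ ℓ) : uu ℓ + (ℓ - 1) • vv ℓ = ((1:ℚ), (1:ℚ)) := by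
  have hq : (qp ℓ : ℚ) ≠ 0 := by exact_mod_cast (qp_pos ℓ).ne'
  have hcu : ((cu ℓ : ℚ)) + ((ℓ - 1 : ℕ) : ℚ) = (qp ℓ : ℚ) := by
    exact_mod_cast cu_add ℓ
  unfold uu vv
  rw [Prod.smul_mk, Prod.mk_add_mk]
  congr 1
  · simp
  · rw [nsmul_eq_mul]
    rw [Nat.cast_sub (by omega : 1 ≤ ℓ)] at hcu
    push_cast at hcu ⊢
    field_simp
    have h1 : ((ℓ - 1 : ℕ) : ℚ) = (ℓ:ℚ) - 1 := by rw [Nat.cast_sub (by omega : 1 ≤ ℓ)]; simp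
    linarith
  
lemma F_b {ℓ : ℕ} (h2 : 2 ≤ ℓ) :
    F (Finsupp.single ℓ 1) (Finsupp.single ℓ (ℓ - 1)) = ((1:ℚ), (1:ℚ)) := by
  unfold F
  rw [kc_single, one_mul, ← Finsupp.single_add, Srec_single]
  have hcu := cu_add ℓ
  rw [hcu]
  have hq : (qp ℓ : ℚ) ≠ 0 := by exact_mod_cast (qp_pos ℓ).ne'
  simp [Tot_single, div_self hq]

lemma b_mem {L : Set ℕ} {ℓ : ℕ} (hℓ : ℓ ∈ SL L) : ((1:ℚ), (1:ℚ)) ∈ MM L := by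
  refine ⟨Finsupp.single ℓ 1, Finsupp.single ℓ (ℓ - 1), ?_, ?_, (F_b hℓ.2).symm⟩
  · refine subset_trans (Finset.coe_subset.mpr Finsupp.support_single_subset) ?_
    simpa using hℓ
  · refine subset_trans (Finset.coe_subset.mpr Finsupp.support_single_subset) ?_
    simpa using hℓ

/-- The length set of `(1,1)` in `MM L` is exactly `SL L`. -/
lemma inner_length (L : Set ℕ) : LengthSet (MM L) ((1:ℚ), (1:ℚ)) = SL L := by
  ext t
  constructor
  · rintro ⟨s, hcard, hatoms, hsum⟩
    obtain ⟨k, m, hk, hm, hcard', hsum'⟩ := ms_to_rep s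
      (fun x hx => MM_atom_gen (hatoms x hx))
    rw [hsum] at hsum'
    obtain ⟨ℓ, hℓ, hkk, hmm⟩ := b_dec hk hsum'.symm
    rw [← hcard, hcard', hkk, hmm, Tot_single, Tot_single]
    have := hℓ.2
    have : 1 + (ℓ - 1) = ℓ := by omega
    rwa [this]
  · intro hℓ
    refine ⟨uu t ::ₘ Multiset.replicate (t - 1) (vv t), ?_, ?_, ?_⟩
    · simp
      have := hℓ.2
      omega
    · intro a ha
      rcases Multiset.mem_cons.mp ha with rfl | ha'
      · exact MM_atom_u hℓ
      · rw [Multiset.eq_of_mem_replicate ha']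
        exact MM_atom_v hℓ
    · rw [Multiset.sum_cons, Multiset.sum_replicate]
      exact uu_add_smul_vv hℓ.2

/-- pointwise weight -/
def phiP (q a : ℕ) : ℕ := 2 * (a / q) + min (a % q) 1

lemma min_one_char (x : ℕ) : (x = 0 ∧ min x 1 = 0) ∨ (0 < x ∧ min x 1 = 1) := by
  rcases Nat.eq_zero_or_pos x with h | h
  · left; simp [h]
  · right; exact ⟨h, min_eq_right h⟩

lemma phiP_eval {q : ℕ} (d r : ℕ) (hq : 0 < q) (hr : r < q) :
    phiP q (q * d + r) = 2 * d + min r 1 := by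
  unfold phiP
  rw [Nat.mul_add_div hq, Nat.mul_add_mod, Nat.div_eq_of_lt hr, Nat.mod_eq_of_lt hr, add_zero]

lemma modP_eval {q : ℕ} (d r : ℕ) (hr : r < q) : (q * d + r) % q = r := by
  rw [Nat.mul_add_mod, Nat.mod_eq_of_lt hr]

lemma PL1 {q a b : ℕ} (hq : 0 < q) : phiP q a ≤ phiP q (a + b) := by
  obtain ⟨d1, r1, hr1, rfl⟩ : ∃ d r, r < q ∧ a = q * d + r :=
    ⟨a / q, a % q, Nat.mod_lt _ hq, (Nat.div_add_mod a q).symm⟩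
  obtain ⟨d2, r2, hr2, rfl⟩ : ∃ d r, r < q ∧ b = q * d + r :=
    ⟨b / q, b % q, Nat.mod_lt _ hq, (Nat.div_add_mod b q).symm⟩
  rcases Nat.lt_or_ge (r1 + r2) q with hc | hc
  · have hsum : q * d1 + r1 + (q * d2 + r2) = q * (d1 + d2) + (r1 + r2) := by ring
    rw [hsum, phiP_eval d1 r1 hq hr1, phiP_eval _ _ hq hc]
    rcases min_one_char r1 with ⟨h1, e1⟩ | ⟨h1, e1⟩ <;>
      rcases min_one_char (r1 + r2) with ⟨h2, e2⟩ | ⟨h2, e2⟩ <;> omega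
  · have hq2 : q * (d1 + d2 + 1) = q * d1 + q * d2 + q := by ring
    have hsum : q * d1 + r1 + (q * d2 + r2) = q * (d1 + d2 + 1) + (r1 + r2 - q) := by omega
    rw [hsum, phiP_eval d1 r1 hq hr1, phiP_eval _ _ hq (by omega)]
    rcases min_one_char r1 with ⟨h1, e1⟩ | ⟨h1, e1⟩ <;>
      rcases min_one_char (r1 + r2 - q) with ⟨h2, e2⟩ | ⟨h2, e2⟩ <;> omega

lemma PL2 {q a b : ℕ} (hq : 0 < q) (he : phiP q (a + b) = phiP q a) :
    b < q ∧ (a + b) % q = a % q + b := by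
  obtain ⟨d1, r1, hr1, rfl⟩ : ∃ d r, r < q ∧ a = q * d + r :=
    ⟨a / q, a % q, Nat.mod_lt _ hq, (Nat.div_add_mod a q).symm⟩
  obtain ⟨d2, r2, hr2, rfl⟩ : ∃ d r, r < q ∧ b = q * d + r :=
    ⟨b / q, b % q, Nat.mod_lt _ hq, (Nat.div_add_mod b q).symm⟩
  rcases Nat.lt_or_ge (r1 + r2) q with hc | hc
  · have hsum : q * d1 + r1 + (q * d2 + r2) = q * (d1 + d2) + (r1 + r2) := by ring
    rw [hsum, phiP_eval d1 r1 hq hr1, phiP_eval _ _ hq hc] at he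
    have hd2 : d2 = 0 ∧ min (r1 + r2) 1 = min r1 1 := by
      rcases min_one_char r1 with ⟨h1, e1⟩ | ⟨h1, e1⟩ <;>
        rcases min_one_char (r1 + r2) with ⟨h2, e2⟩ | ⟨h2, e2⟩ <;> omega
    have hb : q * d2 + r2 = r2 := by
      rw [hd2.1]; ring
    rw [hsum, modP_eval _ _ hc, modP_eval d1 r1 hr1, hb]
    omega
  · exfalso
    have hq2 : q * (d1 + d2 + 1) = q * d1 + q * d2 + q := by ring
    have hsum : q * d1 + r1 + (q * d2 + r2) = q * (d1 + d2 + 1) + (r1 + r2 - q) := by omega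
    rw [hsum, phiP_eval d1 r1 hq hr1, phiP_eval _ _ hq (by omega)] at he
    rcases min_one_char r1 with ⟨h1, e1⟩ | ⟨h1, e1⟩ <;>
      rcases min_one_char (r1 + r2 - q) with ⟨h2, e2⟩ | ⟨h2, e2⟩ <;> omega

/-- global weight -/
noncomputable def Phin (n : ℕ →₀ ℕ) : ℕ := n.sum fun ℓ a => phiP (qp ℓ) a

/-- global secondary weight -/
noncomputable def Psin (n : ℕ →₀ ℕ) : ℕ := n.sum fun ℓ a => a % qp ℓ

lemma Phin_eq_sum (n : ℕ →₀ ℕ) {s : Finset ℕ} (hs : n.support ⊆ s) :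
    Phin n = ∑ ℓ ∈ s, phiP (qp ℓ) (n ℓ) :=
  Finsupp.sum_of_support_subset n hs _ (fun i _ => by simp [phiP])

lemma Psin_eq_sum (n : ℕ →₀ ℕ) {s : Finset ℕ} (hs : n.support ⊆ s) :
    Psin n = ∑ ℓ ∈ s, n ℓ % qp ℓ :=
  Finsupp.sum_of_support_subset n hs _ (fun i _ => by simp)

lemma Tot_eq_sum (n : ℕ →₀ ℕ) {s : Finset ℕ} (hs : n.support ⊆ s) :
    Tot n = ∑ ℓ ∈ s, n ℓ :=
  Finsupp.sum_of_support_subset n hs _ (fun i _ => rfl)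

lemma GL1 (n1 n2 : ℕ →₀ ℕ) : Phin n1 ≤ Phin (n1 + n2) := by
  classical
  set s := n1.support ∪ n2.support with hs
  have h1 : n1.support ⊆ s := Finset.subset_union_left
  have h12 : (n1 + n2).support ⊆ s := subset_trans Finsupp.support_add (by rfl)
  rw [Phin_eq_sum n1 h1, Phin_eq_sum (n1 + n2) h12]
  refine Finset.sum_le_sum ?_
  intro ℓ _
  rw [Finsupp.add_apply]
  exact PL1 (qp_pos ℓ)

lemma GL2 (n1 n2 : ℕ →₀ ℕ) (h : Phin (n1 + n2) = Phin n1) :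
    Psin (n1 + n2) = Psin n1 + Tot n2 := by
  classical
  set s := n1.support ∪ n2.support with hs
  have h1 : n1.support ⊆ s := Finset.subset_union_left
  have h2 : n2.support ⊆ s := Finset.subset_union_right
  have h12 : (n1 + n2).support ⊆ s := subset_trans Finsupp.support_add (by rfl)
  rw [Phin_eq_sum n1 h1, Phin_eq_sum (n1 + n2) h12] at h
  have hle : ∀ ℓ ∈ s, phiP (qp ℓ) (n1 ℓ) ≤ phiP (qp ℓ) ((n1 + n2) ℓ) := by
    intro ℓ _
    rw [Finsupp.add_apply]
    exact PL1 (qp_pos ℓ)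
  have hpt' := (Finset.sum_eq_sum_iff_of_le hle).mp h.symm
  have hpt : ∀ ℓ ∈ s, phiP (qp ℓ) ((n1 + n2) ℓ) = phiP (qp ℓ) (n1 ℓ) :=
    fun ℓ hℓ => (hpt' ℓ hℓ).symm
  rw [Psin_eq_sum n1 h1, Psin_eq_sum (n1 + n2) h12, Tot_eq_sum n2 h2,
    ← Finset.sum_add_distrib]
  refine Finset.sum_congr rfl ?_
  intro ℓ hℓ
  have := PL2 (qp_pos ℓ) (by rw [← Finsupp.add_apply]; exact hpt ℓ hℓ)
  rw [Finsupp.add_apply]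
  exact this.2

lemma Phin_dig (n : ℕ →₀ ℕ) : Phin n = 2 * Zf n + Phin (nmod n) := by
  rw [Phin_eq_sum n (subset_refl _), Phin_eq_sum (nmod n) (nmod_support_subset n),
    Zf_eq_sum n (subset_refl _), Finset.mul_sum, ← Finset.sum_add_distrib]
  refine Finset.sum_congr rfl ?_
  intro ℓ _
  have hlt : n ℓ % qp ℓ < qp ℓ := Nat.mod_lt _ (qp_pos ℓ)
  unfold phiP
  rw [nmod_apply, Nat.div_eq_of_lt hlt, Nat.mod_eq_of_lt hlt]
  ring

lemma Psin_dig (n : ℕ →₀ ℕ) : Psin n = Psin (nmod n) := by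
  rw [Psin_eq_sum n (subset_refl _), Psin_eq_sum (nmod n) (nmod_support_subset n)]
  refine Finset.sum_congr rfl ?_
  intro ℓ _
  have hlt : n ℓ % qp ℓ < qp ℓ := Nat.mod_lt _ (qp_pos ℓ)
  rw [nmod_apply, Nat.mod_eq_of_lt hlt]

/-- the weights only depend on the value `Srec n`. -/
lemma Srec_inv {n n' : ℕ →₀ ℕ} (h : Srec n = Srec n') :
    Phin n = Phin n' ∧ Psin n = Psin n' := by
  have hd := Dig n
  have hd' := Dig n'
  have hml : nmod n = nmod n' := by
    refine ML _ _ (fun ℓ => nmod_lt n ℓ) (fun ℓ => nmod_lt n' ℓ)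
      ((Zf n' : ℤ) - (Zf n : ℤ)) ?_
    push_cast
    linarith
  have hzf : Zf n = Zf n' := by
    have : (Zf n : ℚ) = (Zf n' : ℚ) := by
      rw [hml] at hd
      linarith
    exact_mod_cast this
  constructor
  · rw [Phin_dig n, Phin_dig n', hml, hzf]
  · rw [Psin_dig n, Psin_dig n', hml]

lemma nat_stab (a : ℕ → ℕ) (h : ∀ n, a (n + 1) ≤ a n) : ∃ N, ∀ n ≥ N, a n = a N := by
  have hanti : ∀ i j, i ≤ j → a j ≤ a i := by
    intro i j hij
    induction j, hij using Nat.le_induction with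
    | base => exact le_refl _
    | succ j hij ih => exact le_trans (h j) ih
  obtain ⟨N, hN⟩ : ∃ N, a N = sInf (Set.range a) := Nat.sInf_mem (⟨a 0, 0, rfl⟩ : (Set.range a).Nonempty)
  refine ⟨N, fun n hn => ?_⟩
  have h1 : a n ≤ a N := hanti N n hn
  have h2 : a N ≤ a n := by
    rw [hN]
    exact Nat.sInf_le ⟨n, rfl⟩
  omega

lemma inner_accp (L : Set ℕ) (f : ℕ → ℚ × ℚ) (hf : ∀ n, f n ∈ MM L)
    (hstep : ∀ n, ∃ c ∈ MM L, f n = f (n + 1) + c) : ∃ N, ∀ n ≥ N, f n = f N := by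
  choose k m hk hm hF using hf
  choose c hc hceq using hstep
  choose ck cm hck hcm hFc using hc
  set A : ℕ → ℕ := fun n => Tot (k n) + Phin (kc (k n) + m n) with hA
  set B : ℕ → ℕ := fun n => Psin (kc (k n) + m n) with hB
  -- second components
  have hsnd : ∀ n, (f n).2 = Srec (kc (k n) + m n) := fun n => by rw [hF n]; rfl
  have hfst : ∀ n, (f n).1 = (Tot (k n) : ℚ) := fun n => by rw [hF n]; rfl
  have hABeq : ∀ i j, f i = f j → A i = A j ∧ B i = B j := by
    intro i j hij
    have h2 : Srec (kc (k i) + m i) = Srec (kc (k j) + m j) := by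
      rw [← hsnd i, ← hsnd j, hij]
    have h1 : Tot (k i) = Tot (k j) := by
      have := (hfst i).symm.trans ((congrArg Prod.fst hij).trans (hfst j))
      exact_mod_cast this
    obtain ⟨hphi, hpsi⟩ := Srec_inv h2
    exact ⟨by rw [hA]; simp only; omega, by rw [hB]; simp only [hpsi]⟩
  have hkey : ∀ n, A (n + 1) ≤ A n ∧
      (f n ≠ f (n + 1) → A (n + 1) < A n ∨ (A (n + 1) = A n ∧ B (n + 1) < B n)) := by
    intro n
    have h2 : f n = F (k (n + 1) + ck n) (m (n + 1) + cm n) := by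
      rw [hceq n, hF (n + 1), hFc n, ← F_add]
    have hK : Tot (k n) = Tot (k (n + 1)) + Tot (ck n) := by
      have := (hfst n).symm.trans (congrArg Prod.fst h2)
      rw [show (F (k (n+1) + ck n) (m (n+1) + cm n)).1 = (Tot (k (n+1) + ck n) : ℚ) from rfl,
        Tot_add] at this
      exact_mod_cast this
    have hS : Srec (kc (k n) + m n)
        = Srec ((kc (k (n + 1)) + m (n + 1)) + (kc (ck n) + cm n)) := by
      have := (hsnd n).symm.trans (congrArg Prod.snd h2)
      rw [show (F (k (n+1) + ck n) (m (n+1) + cm n)).2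
          = Srec (kc (k (n+1) + ck n) + (m (n+1) + cm n)) from rfl] at this
      rw [this, kc_add]
      congr 1
      abel
    obtain ⟨hphi, hpsi⟩ := Srec_inv hS
    have hGL1 := GL1 (kc (k (n + 1)) + m (n + 1)) (kc (ck n) + cm n)
    have hPhile : Phin (kc (k (n + 1)) + m (n + 1)) ≤ Phin (kc (k n) + m n) := by
      rw [hphi]; exact hGL1
    constructor
    · simp only [hA]
      omega
    · intro hne
      have hcne : c n ≠ 0 := by
        intro h0
        exact hne (by rw [hceq n, h0, add_zero])
      have hnz : ¬ (ck n = 0 ∧ cm n = 0) := by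
        rintro ⟨h1, h2'⟩
        exact hcne (by rw [hFc n, h1, h2', F_zero])
      rcases Nat.eq_zero_or_pos (Tot (ck n)) with hT | hT
      · -- no u-atoms in c : look at Phi / Psi
        have hck0 : ck n = 0 := Tot_eq_zero hT
        have hcm0 : cm n ≠ 0 := fun h => hnz ⟨hck0, h⟩
        have hCn : kc (ck n) + cm n = cm n := by rw [hck0, kc_zero, zero_add]
        rcases lt_or_eq_of_le hPhile with hlt | heq
        · left
          simp only [hA]
          omega
        · right
          have hGL2 := GL2 (kc (k (n + 1)) + m (n + 1)) (kc (ck n) + cm n)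
            (by rw [← hphi, heq])
          have hTot : 1 ≤ Tot (kc (ck n) + cm n) := by
            rcases Nat.eq_zero_or_pos (Tot (kc (ck n) + cm n)) with h0 | h0
            · exact absurd (by
                have := Tot_eq_zero h0
                rw [hCn] at this
                exact this) hcm0
            · exact h0
          constructor
          · simp only [hA]
            omega
          · simp only [hB]
            omega
      · left
        simp only [hA]
        omega
  obtain ⟨N1, hN1⟩ := nat_stab A (fun n => (hkey n).1)
  have hBtail : ∀ i, B (N1 + i + 1) ≤ B (N1 + i) := by
    intro i
    by_cases hfe : f (N1 + i) = f (N1 + i + 1)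
    · exact le_of_eq ((hABeq _ _ hfe).2).symm
    · rcases (hkey (N1 + i)).2 hfe with hlt | ⟨_, hlt⟩
      · exfalso
        have e1 : A (N1 + i) = A N1 := hN1 _ (by omega)
        have e2 : A (N1 + i + 1) = A N1 := hN1 _ (by omega)
        omega
      · exact le_of_lt hlt
  obtain ⟨N2, hN2⟩ := nat_stab (fun i => B (N1 + i)) hBtail
  set N := N1 + N2 with hN
  have hconst : ∀ n ≥ N, f n = f (n + 1) := by
    intro n hn
    by_contra hne
    rcases (hkey n).2 hne with hlt | ⟨_, hlt⟩
    · have e1 : A n = A N1 := hN1 _ (by omega)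
      have e2 : A (n + 1) = A N1 := hN1 _ (by omega)
      omega
    · have e1 : B (N1 + (n - N1)) = B (N1 + N2) := hN2 _ (by omega)
      have e2 : B (N1 + (n + 1 - N1)) = B (N1 + N2) := hN2 _ (by omega)
      rw [show N1 + (n - N1) = n by omega] at e1
      rw [show N1 + (n + 1 - N1) = n + 1 by omega] at e2
      omega
  refine ⟨N, fun n hn => ?_⟩
  induction n, hn using Nat.le_induction with
  | base => rfl
  | succ n hn ih => rw [← ih]; exact (hconst n hn).symm

/-- index type: a pair of sets (first = which length set, second = a tag making
uncountably many copies), and a boolean for the two coordinates -/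
abbrev PairT : Type := Set ℕ × Set ℕ
abbrev IdxT : Type := PairT × Bool

noncomputable def embP (p : PairT) (z : ℚ × ℚ) : IdxT →₀ ℚ :=
  Finsupp.single (p, false) z.1 + Finsupp.single (p, true) z.2

def projP (p : PairT) (x : IdxT →₀ ℚ) : ℚ × ℚ := (x (p, false), x (p, true))

lemma projP_add (p : PairT) (x y : IdxT →₀ ℚ) :
    projP p (x + y) = projP p x + projP p y := by
  simp [projP, Prod.ext_iff]

@[simp] lemma projP_zero (p : PairT) : projP p 0 = 0 := by simp [projP, Prod.ext_iff]

lemma ne_ft (p : PairT) : ((p, false) : IdxT) ≠ (p, true) := by simp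

@[simp] lemma embP_apply_f (p : PairT) (z : ℚ × ℚ) : embP p z (p, false) = z.1 := by
  classical
  simp [embP, Finsupp.single_apply]

@[simp] lemma embP_apply_t (p : PairT) (z : ℚ × ℚ) : embP p z (p, true) = z.2 := by
  classical
  simp [embP, Finsupp.single_apply]

lemma embP_apply_ne (p : PairT) (z : ℚ × ℚ) (j : IdxT) (hj : j.1 ≠ p) :
    embP p z j = 0 := by
  classical
  have h1 : ((p, false) : IdxT) ≠ j := fun h => hj (by rw [← h])
  have h2 : ((p, true) : IdxT) ≠ j := fun h => hj (by rw [← h])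
  simp [embP, Finsupp.single_apply_eq_zero.mpr (fun h => absurd h.symm h1),
    Finsupp.single_apply_eq_zero.mpr (fun h => absurd h.symm h2)]

@[simp] lemma projP_embP (p : PairT) (z : ℚ × ℚ) : projP p (embP p z) = z := by
  simp [projP]

lemma projP_embP_ne (p p' : PairT) (z : ℚ × ℚ) (h : p' ≠ p) :
    projP p' (embP p z) = 0 := by
  have h1 : embP p z (p', false) = 0 := embP_apply_ne p z _ h
  have h2 : embP p z (p', true) = 0 := embP_apply_ne p z _ h
  simp [projP, Prod.ext_iff, h1, h2]

lemma embP_add (p : PairT) (z w : ℚ × ℚ) :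
    embP p (z + w) = embP p z + embP p w := by
  unfold embP
  rw [Prod.fst_add, Prod.snd_add, Finsupp.single_add, Finsupp.single_add]
  abel

@[simp] lemma embP_zero (p : PairT) : embP p 0 = 0 := by simp [embP]

lemma embP_eq_zero_iff (p : PairT) (z : ℚ × ℚ) : embP p z = 0 ↔ z = 0 := by
  constructor
  · intro h
    have := congrArg (projP p) h
    simpa using this
  · rintro rfl; exact embP_zero p

/-- the big monoid -/
noncomputable def BigM : AddSubmonoid (IdxT →₀ ℚ) where
  carrier := {x | ∀ p : PairT, projP p x ∈ MM p.1}
  zero_mem' := fun p => by simp [(MM p.1).zero_mem]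
  add_mem' := by
    intro x y hx hy p
    rw [projP_add]
    exact (MM p.1).add_mem (hx p) (hy p)

lemma mem_BigM_iff {x : IdxT →₀ ℚ} : x ∈ BigM ↔ ∀ p : PairT, projP p x ∈ MM p.1 :=
  Iff.rfl

lemma embP_mem {p : PairT} {z : ℚ × ℚ} (hz : z ∈ MM p.1) : embP p z ∈ BigM := by
  intro p'
  rcases eq_or_ne p' p with rfl | hne
  · simpa using hz
  · rw [projP_embP_ne p p' z hne]
    exact (MM p'.1).zero_mem

lemma BigM_nonneg {x : IdxT →₀ ℚ} (hx : x ∈ BigM) : ∀ j, 0 ≤ x j := by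
  rintro ⟨p, bb⟩
  have := MM_nonneg (hx p)
  cases bb
  · exact this.1
  · exact this.2

/-- if `x` vanishes off the two coordinates of `p` then `x` is an embedded pair -/
lemma eq_embP_of_support {x : IdxT →₀ ℚ} {p : PairT}
    (h : ∀ j : IdxT, j.1 ≠ p → x j = 0) : x = embP p (projP p x) := by
  ext j
  rcases eq_or_ne j.1 p with hp | hp
  · obtain ⟨p', bb⟩ := j
    simp only at hp
    subst hp
    cases bb
    · rw [embP_apply_f]; rfl
    · rw [embP_apply_t]; rfl
  · rw [h j hp, embP_apply_ne _ _ _ hp]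

/-- sum of nonnegative rationals in a multiset is zero iff all are zero -/
lemma multiset_sum_zero {t : Multiset ℚ} (h : ∀ x ∈ t, 0 ≤ x) (hs : t.sum = 0) :
    ∀ x ∈ t, x = 0 := by
  induction t using Multiset.induction_on with
  | empty => intro x hx; exact absurd hx (Multiset.notMem_zero x)
  | cons a t ih =>
    rw [Multiset.sum_cons] at hs
    have hts : 0 ≤ t.sum := Multiset.sum_nonneg (fun x hx => h x (Multiset.mem_cons_of_mem hx))
    have ha : 0 ≤ a := h a (Multiset.mem_cons_self a t)
    have ha0 : a = 0 := by linarith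
    have ht0 : t.sum = 0 := by linarith
    intro x hx
    rcases Multiset.mem_cons.mp hx with rfl | hx'
    · exact ha0
    · exact ih (fun y hy => h y (Multiset.mem_cons_of_mem hy)) ht0 x hx'

noncomputable def embHom (p : PairT) : (ℚ × ℚ) →+ (IdxT →₀ ℚ) :=
  { toFun := embP p, map_zero' := embP_zero p, map_add' := embP_add p }

noncomputable def projHom (p : PairT) : (IdxT →₀ ℚ) →+ (ℚ × ℚ) :=
  { toFun := projP p, map_zero' := projP_zero p, map_add' := projP_add p }

lemma atom_emb {p : PairT} {z : ℚ × ℚ} (hz : IsAtomOf (MM p.1) z) :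
    IsAtomOf BigM (embP p z) := by
  refine ⟨embP_mem hz.1, fun h => hz.2.1 ((embP_eq_zero_iff p z).mp h), ?_⟩
  intro b hb c hc hsum
  have hb0 : b = embP p (projP p b) := by
    refine eq_embP_of_support ?_
    intro j hj
    have h1 : b j + c j = 0 := by
      have := congrArg (fun y => y j) hsum
      simpa [embP_apply_ne p z j hj] using this
    have h2 := BigM_nonneg hb j
    have h3 := BigM_nonneg hc j
    linarith
  have hc0 : c = embP p (projP p c) := by
    refine eq_embP_of_support ?_
    intro j hj
    have h1 : b j + c j = 0 := by
      have := congrArg (fun y => y j) hsum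
      simpa [embP_apply_ne p z j hj] using this
    have h2 := BigM_nonneg hb j
    have h3 := BigM_nonneg hc j
    linarith
  have hps : projP p b + projP p c = z := by
    rw [← projP_add, hsum, projP_embP]
  rcases hz.2.2 (projP p b) (hb p) (projP p c) (hc p) hps with h0 | h0
  · left; rw [hb0, h0, embP_zero]
  · right; rw [hc0, h0, embP_zero]

lemma atom_of_big {x : IdxT →₀ ℚ} (hx : IsAtomOf BigM x) :
    ∃ p z, x = embP p z ∧ IsAtomOf (MM p.1) z := by
  classical
  obtain ⟨hmem, hne, hatom⟩ := hx
  have hj : ∃ j, x j ≠ 0 := by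
    by_contra hc
    push_neg at hc
    exact hne (Finsupp.ext hc)
  obtain ⟨⟨p, bb⟩, hjne⟩ := hj
  set y := embP p (projP p x) with hy
  have hymem : y ∈ BigM := embP_mem (hmem p)
  set w := x - y with hw
  have hwp : projP p w = 0 := by
    have h1 : w (p, false) = 0 := by
      rw [hw, Finsupp.sub_apply, hy, embP_apply_f]
      simp [projP]
    have h2 : w (p, true) = 0 := by
      rw [hw, Finsupp.sub_apply, hy, embP_apply_t]
      simp [projP]
    show (w (p, false), w (p, true)) = 0
    rw [h1, h2]
    rfl
  have hwne : ∀ p', p' ≠ p → projP p' w = projP p' x := by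
    intro p' hne'
    have hz : projP p' y = 0 := by rw [hy]; exact projP_embP_ne p p' _ hne'
    have heq : projP p' w = projP p' x - projP p' y := by
      simp [projP, hw, Prod.ext_iff]
    rw [heq, hz, sub_zero]
  have hwmem : w ∈ BigM := by
    intro p'
    rcases eq_or_ne p' p with heq' | hne'
    · rw [heq', hwp]
      exact AddSubmonoid.zero_mem _
    · rw [hwne p' hne']
      exact hmem p'
  have hxsum : y + w = x := by rw [hw]; abel
  rcases hatom y hymem w hwmem hxsum with h0 | h0
  · exfalso
    have : projP p x = 0 := by
      rw [hy] at h0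
      exact (embP_eq_zero_iff _ _).mp h0
    have : x (p, bb) = 0 := by
      cases bb
      · exact congrArg Prod.fst this
      · exact congrArg Prod.snd this
    exact hjne this
  · have hxy : x = y := by rw [← hxsum, h0, add_zero]
    refine ⟨p, projP p x, by conv_lhs => rw [hxy, hy], ?_⟩
    refine ⟨hmem p, ?_, ?_⟩
    · intro h0'
      apply hne
      rw [hxy, hy, h0', embP_zero]
    · intro z1 hz1 z2 hz2 hzsum
      have : embP p z1 + embP p z2 = x := by
        rw [← embP_add, hzsum]
        conv_rhs => rw [hxy, hy]
      rcases hatom (embP p z1) (embP_mem hz1) (embP p z2) (embP_mem hz2) this with h0' | h0'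
      · left; exact (embP_eq_zero_iff _ _).mp h0'
      · right; exact (embP_eq_zero_iff _ _).mp h0'

lemma length_emb (p : PairT) (z : ℚ × ℚ) :
    LengthSet BigM (embP p z) = LengthSet (MM p.1) z := by
  ext t
  constructor
  · rintro ⟨s, hcard, hatoms, hsum⟩
    -- every atom in s is supported on the p coordinates
    have hkey : ∀ a ∈ s, ∃ z', a = embP p z' ∧ IsAtomOf (MM p.1) z' := by
      intro a ha
      obtain ⟨p', z', haz, hz'⟩ := atom_of_big (hatoms a ha)
      rcases eq_or_ne p' p with rfl | hne'
      · exact ⟨z', haz, hz'⟩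
      · exfalso
        -- z' must be zero since sum vanishes on p' coordinates
        have hcoordz : ∀ bb : Bool, a ((p', bb)) = 0 := by
          intro bb
          have hsumz : (s.sum) ((p', bb) : IdxT) = 0 := by
            rw [hsum]
            exact embP_apply_ne p z _ (by simpa using hne')
          have hmap : (s.map (fun y : IdxT →₀ ℚ => y ((p', bb) : IdxT))).sum = 0 := by
            rw [← hsumz]
            exact (AddMonoidHom.map_multiset_sum (Finsupp.applyAddHom ((p', bb) : IdxT)) s).symm
          refine multiset_sum_zero ?_ hmap _ (Multiset.mem_map_of_mem _ ha)
          intro u hu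
          obtain ⟨v, hv, rfl⟩ := Multiset.mem_map.mp hu
          exact BigM_nonneg (hatoms v hv).1 _
        apply hz'.2.1
        have h1 : z'.1 = 0 := by
          have := hcoordz false
          rwa [haz, embP_apply_f] at this
        have h2 : z'.2 = 0 := by
          have := hcoordz true
          rwa [haz, embP_apply_t] at this
        exact Prod.ext h1 h2
    refine ⟨s.map (projP p), by rw [Multiset.card_map, hcard], ?_, ?_⟩
    · intro a ha
      obtain ⟨v, hv, rfl⟩ := Multiset.mem_map.mp ha
      obtain ⟨z', rfl, hz'⟩ := hkey v hv
      rwa [projP_embP]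
    · have : (s.map (projP p)).sum = projP p s.sum := by
        rw [show s.map (projP p) = s.map (projHom p) from rfl,
          ← AddMonoidHom.map_multiset_sum (projHom p) s]
        rfl
      rw [this, hsum, projP_embP]
  · rintro ⟨s, hcard, hatoms, hsum⟩
    refine ⟨s.map (embP p), by rw [Multiset.card_map, hcard], ?_, ?_⟩
    · intro a ha
      obtain ⟨v, hv, rfl⟩ := Multiset.mem_map.mp ha
      exact atom_emb (hatoms v hv)
    · rw [show s.map (embP p) = s.map (embHom p) from rfl,
        ← AddMonoidHom.map_multiset_sum (embHom p) s, hsum]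
      rfl

lemma big_accp : AddACCP BigM := by
  intro f hf hstep
  classical
  choose c hc hceq using hstep
  have hg : ∀ n, ∃ g ∈ BigM, f 0 = f n + g := by
    intro n
    induction n with
    | zero => exact ⟨0, BigM.zero_mem, by rw [add_zero]⟩
    | succ n ih =>
      obtain ⟨g, hgmem, hgeq⟩ := ih
      exact ⟨c n + g, BigM.add_mem (hc n) hgmem, by rw [hgeq, hceq n]; abel⟩
  have hbound : ∀ n j, f n j ≤ f 0 j := by
    intro n j
    obtain ⟨g, hgmem, hgeq⟩ := hg n
    have h1 := BigM_nonneg hgmem j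
    have h2 : f 0 j = f n j + g j := by rw [hgeq]; simp
    linarith
  have hstab : ∀ p : PairT, ∃ N, ∀ n ≥ N, projP p (f n) = projP p (f N) := by
    intro p
    refine inner_accp p.1 (fun n => projP p (f n)) (fun n => hf n p) ?_
    intro n
    refine ⟨projP p (c n), hc n p, ?_⟩
    show projP p (f n) = projP p (f (n + 1)) + projP p (c n)
    rw [hceq n, projP_add]
  choose Np hNp using hstab
  set S : Finset PairT := (f 0).support.image Prod.fst with hS
  set N := S.sup Np with hN
  refine ⟨N, fun n hn => ⟨0, BigM.zero_mem, ?_⟩⟩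
  rw [add_zero]
  ext j
  obtain ⟨p, bb⟩ := j
  by_cases hp : p ∈ S
  · have h1 : Np p ≤ N := Finset.le_sup hp
    have e1 : projP p (f n) = projP p (f (Np p)) := hNp p n (by omega)
    have e2 : projP p (f N) = projP p (f (Np p)) := hNp p N (by omega)
    have he := e1.trans e2.symm
    cases bb
    · exact congrArg Prod.fst he
    · exact congrArg Prod.snd he
  · have h0 : ∀ m, f m ((p, bb) : IdxT) = 0 := by
      intro m
      have hz : f 0 ((p, bb) : IdxT) = 0 := by
        by_contra hnz
        exact hp (Finset.mem_image.mpr ⟨(p, bb), Finsupp.mem_support_iff.mpr hnz, rfl⟩)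
      have h1 := hbound m (p, bb)
      have h2 : 0 ≤ f m ((p, bb) : IdxT) := BigM_nonneg (hf m) _
      rw [hz] at h1
      linarith
    rw [h0 n, h0 N]

lemma SL_eq {L : Set ℕ} (hL2 : ∀ ℓ ∈ L, 2 ≤ ℓ) : SL L = L := by
  ext ℓ
  exact ⟨fun h => h.1, fun h => ⟨h, hL2 ℓ h⟩⟩


theorem stmt17 :
    ∃ (ι : Type) (M : AddSubmonoid (ι →₀ ℚ)),
      (∀ x ∈ M, ∀ i, 0 ≤ x i) ∧ AddACCP M ∧
      (∀ L : Set ℕ, L.Nonempty → (∀ ℓ ∈ L, 2 ≤ ℓ) →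
        ∃ b ∈ M, LengthSet M b = L) ∧
      (∀ L : Set ℕ, L.Nonempty → (∀ ℓ ∈ L, 2 < ℓ) →
        ¬ Set.Countable {b : ι →₀ ℚ | b ∈ M ∧ LengthSet M b = L}) := by
  refine ⟨IdxT, BigM, fun x hx i => BigM_nonneg hx i, big_accp, ?_, ?_⟩
  · intro L hLne hL2
    obtain ⟨ℓ0, hℓ0⟩ := hLne
    have hℓ0SL : ℓ0 ∈ SL L := ⟨hℓ0, hL2 _ hℓ0⟩
    refine ⟨embP ((L, (∅ : Set ℕ)) : PairT) ((1:ℚ), (1:ℚ)),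
      embP_mem (p := ((L, (∅ : Set ℕ)) : PairT)) (b_mem hℓ0SL), ?_⟩
    rw [length_emb ((L, (∅ : Set ℕ)) : PairT) _]
    exact (inner_length L).trans (SL_eq hL2)
  · intro L hLne hL3 hcount
    have hL2 : ∀ ℓ ∈ L, 2 ≤ ℓ := fun ℓ h => le_of_lt (hL3 ℓ h)
    obtain ⟨ℓ0, hℓ0⟩ := hLne
    have hℓ0SL : ℓ0 ∈ SL L := ⟨hℓ0, hL2 _ hℓ0⟩
    set T : Set (IdxT →₀ ℚ) := {b | b ∈ BigM ∧ LengthSet BigM b = L} with hT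
    have hmem : ∀ J : Set ℕ, embP ((L, J) : PairT) ((1:ℚ), (1:ℚ)) ∈ T := by
      intro J
      constructor
      · exact embP_mem (p := ((L, J) : PairT)) (b_mem hℓ0SL)
      · rw [length_emb ((L, J) : PairT) _]
        exact (inner_length L).trans (SL_eq hL2)
    have : Countable T := Set.countable_coe_iff.mpr hcount
    have hinj : Function.Injective
        (fun J : Set ℕ => (⟨embP ((L, J) : PairT) ((1:ℚ), (1:ℚ)), hmem J⟩ : T)) := by
      intro J J' hJJ
      by_contra hne
      have hval := congrArg (fun b : T => (b : IdxT →₀ ℚ) (((L, J) : PairT), false)) hJJ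
      simp only at hval
      rw [embP_apply_f] at hval
      rw [embP_apply_ne ((L, J') : PairT) _ ((((L, J) : PairT), false) : IdxT)
        (by simpa using hne)] at hval
      norm_num at hval
    have : Countable (Set ℕ) := Function.Injective.countable hinj
    obtain ⟨g, hg⟩ := exists_injective_nat (Set ℕ)
    exact Function.cantor_injective g hg
end
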